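/- arXiv:2211.08324 — 6 statements merged into one kernel-verified Lean document; each statement's English description precedes it below -/
import Mathlib

section
/- Let p ≥ 1 and q ≥ 0 be integers, let H ⊆ E be an edge set, and let s, t ∈ V be distinct vertices. Then s and t are (p, q)-flex-connected in H if and only if every vertex set S ⊆ V with s ∈ S and t ∉ S satisfies |δ_H(S) ∩ 𝒮| ≥ p or |δ_H(S)| ≥ p + q. -/
open scoped Classical

/-- The edges of `H` with exactly one endpoint in `S` (the cut `δ_H(S)`).
Edges are abstract objects of type `E` with endpoint maps `g₁ g₂ : E → V`. -/
noncomputable def cutEdges {V E : Type*} (g₁ g₂ : E → V) (H : Finset E) (S : Finset V) :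
    Finset E :=
  H.filter fun e => (g₁ e ∈ S) ≠ (g₂ e ∈ S)

/-- `u` and `v` are connected by a path using only edges of `H`. -/
def ConnectedIn {V E : Type*} (g₁ g₂ : E → V) (H : Finset E) (u v : V) : Prop :=
  Relation.ReflTransGen (fun a b => ∃ e ∈ H, (g₁ e = a ∧ g₂ e = b) ∨ (g₁ e = b ∧ g₂ e = a)) u v

/-- `u` and `v` are `p`-edge-connected in `H`: for every `D ⊆ H` with `|D| ≤ p - 1`,
`u` and `v` are connected in `H \ D`. -/
def PEdgeConnected {V E : Type*} (g₁ g₂ : E → V) (p : ℕ) (H : Finset E) (u v : V) : Prop :=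
  ∀ D : Finset E, D ⊆ H → D.card ≤ p - 1 → ConnectedIn g₁ g₂ (H \ D) u v

/-- `u` and `v` are `(p,q)`-flex-connected in `H` (with unsafe edge set `Unsafe`):
for every `U ⊆ Unsafe` with `|U| ≤ q`, `u` and `v` are `p`-edge-connected in `H \ U`. -/
def FlexConnected {V E : Type*} (g₁ g₂ : E → V) (Unsafe : Finset E) (p q : ℕ)
    (H : Finset E) (u v : V) : Prop :=
  ∀ U : Finset E, U ⊆ Unsafe → U.card ≤ q → PEdgeConnected g₁ g₂ p (H \ U) u v

lemma exists_cross {V E : Type*} (g₁ g₂ : E → V) (K : Finset E) (S : Finset V)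
    {u v : V} (h : ConnectedIn g₁ g₂ K u v) (hu : u ∈ S) (hv : v ∉ S) :
    ∃ e ∈ K, (g₁ e ∈ S) ≠ (g₂ e ∈ S) := by
  revert hv
  induction h with
  | refl => exact fun hv => absurd hu hv
  | @tail b c _ hstep ih =>
    intro hv
    by_cases hb : b ∈ S
    · obtain ⟨e, he, h1 | h2⟩ := hstep
      · exact ⟨e, he, by simp [h1.1, h1.2, hb, hv]⟩
      · exact ⟨e, he, by simp [h2.1, h2.2, hb, hv]⟩
    · exact ih hb

/-- `s` and `t` are `(p,q)`-flex-connected in `H` iff every vertex set `S` with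
`s ∈ S`, `t ∉ S` has at least `p` safe edges or at least `p + q` edges in `δ_H(S)`. -/
theorem flex_connected_iff_cut_condition {V E : Type*} [Fintype V] [Fintype E]
    (g₁ g₂ : E → V) (Safe Unsafe : Finset E) (hpart : Unsafe = Safeᶜ)
    (p q : ℕ) (hp : 1 ≤ p) (H : Finset E) (s t : V) (hst : s ≠ t) :
    FlexConnected g₁ g₂ Unsafe p q H s t ↔
      ∀ S : Finset V, s ∈ S → t ∉ S →
        p ≤ (cutEdges g₁ g₂ H S ∩ Safe).card ∨ p + q ≤ (cutEdges g₁ g₂ H S).card := by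
  constructor
  · intro hflex S hs ht
    by_contra hcon
    push_neg at hcon
    obtain ⟨h1, h2⟩ := hcon
    set F := cutEdges g₁ g₂ H S with hF
    have hFH : F ⊆ H := Finset.filter_subset _ _
    have hFS : F ∩ Safe ⊆ F := Finset.inter_subset_left
    -- pick D with F ∩ Safe ⊆ D ⊆ F, |D| = min (p-1) |F|
    obtain ⟨D, hDl, hDr, hDcard⟩ := Finset.exists_subsuperset_card_eq (n := min (p - 1) F.card)
      hFS (le_min (by omega) (Finset.card_le_card hFS)) (min_le_right _ _)
    set U := F \ D with hU
    have hUunsafe : U ⊆ Unsafe := by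
      rw [hpart]
      intro e he
      simp only [hU, Finset.mem_sdiff] at he
      simp only [Finset.mem_compl]
      intro hsafe
      exact he.2 (hDl (Finset.mem_inter.2 ⟨he.1, hsafe⟩))
    have hUcard : U.card ≤ q := by
      have hsd : U.card = F.card - D.card := Finset.card_sdiff_of_subset hDr
      rcases le_total (p - 1) F.card with h | h
      · rw [min_eq_left h] at hDcard; omega
      · rw [min_eq_right h] at hDcard; omega
    have hflexU := hflex U hUunsafe hUcard D
      (by
        intro e he
        simp only [Finset.mem_sdiff, hU]
        exact ⟨hFH (hDr he), fun h => h.2 he⟩)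
      (by omega)
    have hsub : (H \ U) \ D = H \ F := by
      ext e
      simp only [Finset.mem_sdiff, hU]
      constructor
      · rintro ⟨⟨heH, heU⟩, heD⟩
        refine ⟨heH, fun heF => ?_⟩
        exact heU ⟨heF, heD⟩
      · rintro ⟨heH, heF⟩
        exact ⟨⟨heH, fun h => heF h.1⟩, fun h => heF (hDr h)⟩
    rw [hsub] at hflexU
    obtain ⟨e, he, hcross⟩ := exists_cross g₁ g₂ _ S hflexU hs ht
    rw [Finset.mem_sdiff] at he
    exact he.2 (Finset.mem_filter.2 ⟨he.1, hcross⟩)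
  · intro hcut U hUuns hUq D hDsub hDp
    by_contra hnc
    set K := (H \ U) \ D with hK
    set S := Finset.univ.filter (fun w => ConnectedIn g₁ g₂ K s w) with hS
    have hs : s ∈ S := by
      simp only [hS, Finset.mem_filter, Finset.mem_univ, true_and]
      exact Relation.ReflTransGen.refl
    have ht : t ∉ S := by simpa [hS] using hnc
    have hstep : ∀ e ∈ K, (g₁ e ∈ S) = (g₂ e ∈ S) := by
      intro e he
      simp only [hS, Finset.mem_filter, Finset.mem_univ, true_and, eq_iff_iff]
      constructor
      · intro h1
        exact h1.tail ⟨e, he, Or.inl ⟨rfl, rfl⟩⟩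
      · intro h2
        exact h2.tail ⟨e, he, Or.inr ⟨rfl, rfl⟩⟩
    have hcutsub : cutEdges g₁ g₂ H S ⊆ U ∪ D := by
      intro e he
      simp only [cutEdges, Finset.mem_filter] at he
      by_contra hmem
      rw [Finset.mem_union] at hmem
      push_neg at hmem
      have heK : e ∈ K := by
        simp only [hK, Finset.mem_sdiff]
        exact ⟨⟨he.1, hmem.1⟩, hmem.2⟩
      exact he.2 (hstep e heK)
    have hcard : (cutEdges g₁ g₂ H S).card ≤ U.card + D.card :=
      le_trans (Finset.card_le_card hcutsub) (Finset.card_union_le _ _)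
    have hsafecard : (cutEdges g₁ g₂ H S ∩ Safe).card ≤ D.card := by
      apply Finset.card_le_card
      intro e he
      rw [Finset.mem_inter] at he
      have := hcutsub he.1
      rw [Finset.mem_union] at this
      rcases this with h | h
      · exfalso
        have := hUuns h
        rw [hpart, Finset.mem_compl] at this
        exact this he.2
      · exact h
    rcases hcut S hs ht with h | h <;> omega
end

section
/- Let p ≥ 1 and q ≥ 0 be integers and let H' ⊆ E ∖ H. Then every terminal pair (s_i, t_i) is (p, q + 1)-flex-connected in H ∪ H' if and only if H' covers all violated cuts, i.e. δ_{H'}(S) ≠ ∅ for every violated vertex set S. -/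
open scoped Classical

/-- A vertex set `S` is violated (w.r.t. the partial solution `H`, safe edges `Safe`,
parameters `p q` and terminal pairs `st`): exactly one of `s_i, t_i` lies in `S` for
some `i`, `|δ_H(S)| = p + q`, and `|δ_H(S) ∩ Safe| ≤ p - 1`. -/
def Violated {V E : Type*} (g₁ g₂ : E → V) (Safe : Finset E) (p q : ℕ) {k : ℕ}
    (st : Fin k → V × V) (H : Finset E) (S : Finset V) : Prop :=
  (∃ i : Fin k, ((st i).1 ∈ S) ≠ ((st i).2 ∈ S)) ∧
    (cutEdges g₁ g₂ H S).card = p + q ∧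
    (cutEdges g₁ g₂ H S ∩ Safe).card ≤ p - 1

section Aux

variable {V E : Type*} (g₁ g₂ : E → V)

lemma mem_cutEdges {H : Finset E} {S : Finset V} {e : E} :
    e ∈ cutEdges g₁ g₂ H S ↔ e ∈ H ∧ ((g₁ e ∈ S) ≠ (g₂ e ∈ S)) := by
  simp [cutEdges]

lemma cutEdges_subset (H : Finset E) (S : Finset V) :
    cutEdges g₁ g₂ H S ⊆ H := Finset.filter_subset _ _

lemma cutEdges_sdiff (H U : Finset E) (S : Finset V) :
    cutEdges g₁ g₂ (H \ U) S = cutEdges g₁ g₂ H S \ U := by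
  ext e
  simp only [cutEdges, Finset.mem_filter, Finset.mem_sdiff]
  tauto

lemma cutEdges_union (H H' : Finset E) (S : Finset V) :
    cutEdges g₁ g₂ (H ∪ H') S = cutEdges g₁ g₂ H S ∪ cutEdges g₁ g₂ H' S := by
  ext e
  simp only [cutEdges, Finset.mem_filter, Finset.mem_union]
  tauto

lemma connectedIn_symm {K : Finset E} {u v : V} (h : ConnectedIn g₁ g₂ K u v) :
    ConnectedIn g₁ g₂ K v u := by
  refine (@Relation.ReflTransGen.symmetric _ _ ⟨?_⟩).symm _ _ h
  rintro a b ⟨e, he, hor⟩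
  exact ⟨e, he, hor.symm⟩

lemma cut_nonempty_of_connectedIn {K : Finset E} {u v : V} {S : Finset V}
    (h : ConnectedIn g₁ g₂ K u v) (hu : u ∈ S) (hv : v ∉ S) :
    (cutEdges g₁ g₂ K S).Nonempty := by
  revert hv
  induction h with
  | refl => exact fun hv => absurd hu hv
  | @tail b c hab hbc ih =>
    intro hv
    by_cases hb : b ∈ S
    · obtain ⟨e, he, ⟨h1, h2⟩ | ⟨h1, h2⟩⟩ := hbc
      · exact ⟨e, (mem_cutEdges g₁ g₂).2 ⟨he, by rw [h1, h2]; simp [hb, hv]⟩⟩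
      · exact ⟨e, (mem_cutEdges g₁ g₂).2 ⟨he, by rw [h1, h2]; simp [hb, hv]⟩⟩
    · exact ih hb

lemma cut_nonempty_of_connectedIn' {K : Finset E} {u v : V} {S : Finset V}
    (h : ConnectedIn g₁ g₂ K u v) (hsep : (u ∈ S) ≠ (v ∈ S)) :
    (cutEdges g₁ g₂ K S).Nonempty := by
  by_cases hu : u ∈ S
  · by_cases hv : v ∈ S
    · exact absurd (by simp [hu, hv]) hsep
    · exact cut_nonempty_of_connectedIn g₁ g₂ h hu hv
  · by_cases hv : v ∈ S
    · exact cut_nonempty_of_connectedIn g₁ g₂ (connectedIn_symm g₁ g₂ h) hv hu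
    · exact absurd (by simp [hu, hv]) hsep

lemma connectedIn_of_cuts [Fintype V] {K : Finset E} {u v : V}
    (h : ∀ S : Finset V, u ∈ S → v ∉ S → (cutEdges g₁ g₂ K S).Nonempty) :
    ConnectedIn g₁ g₂ K u v := by
  by_contra hnc
  set S : Finset V := Finset.univ.filter (fun x => ConnectedIn g₁ g₂ K u x) with hS
  have hmem : ∀ x, x ∈ S ↔ ConnectedIn g₁ g₂ K u x := by
    intro x; simp [hS]
  obtain ⟨e, he⟩ := h S ((hmem u).2 Relation.ReflTransGen.refl)
    (fun hvS => hnc ((hmem v).1 hvS))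
  rw [mem_cutEdges] at he
  obtain ⟨heK, hne⟩ := he
  apply hne
  have h12 : g₁ e ∈ S → g₂ e ∈ S := fun h1 =>
    (hmem _).2 (((hmem _).1 h1).tail ⟨e, heK, Or.inl ⟨rfl, rfl⟩⟩)
  have h21 : g₂ e ∈ S → g₁ e ∈ S := fun h1 =>
    (hmem _).2 (((hmem _).1 h1).tail ⟨e, heK, Or.inr ⟨rfl, rfl⟩⟩)
  exact propext ⟨h12, h21⟩

/-- Per-cut counting characterization of flex-connectivity. -/
lemma flex_iff_cuts {V E : Type*} [Fintype V] [Fintype E] (g₁ g₂ : E → V)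
    (Safe Unsafe : Finset E) (hpart : Unsafe = Safeᶜ) (p q : ℕ) (hp : 1 ≤ p)
    (H : Finset E) (u v : V) :
    FlexConnected g₁ g₂ Unsafe p q H u v ↔
      ∀ S : Finset V, (u ∈ S) ≠ (v ∈ S) →
        p ≤ (cutEdges g₁ g₂ H S ∩ Safe).card ∨ p + q ≤ (cutEdges g₁ g₂ H S).card := by
  constructor
  · intro hf S hsep
    by_contra hcon
    push_neg at hcon
    obtain ⟨hsafe, hcut⟩ := hcon
    set C := cutEdges g₁ g₂ H S with hC
    obtain ⟨U, hUsub, hUcard, D, hDsubC, hDdisj, hDcard, hCUD⟩ :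
        ∃ U, U ⊆ Unsafe ∧ U.card ≤ q ∧
          ∃ D, D ⊆ C ∧ Disjoint D U ∧ D.card ≤ p - 1 ∧ C \ U ⊆ D := by
      by_cases hq : (C ∩ Unsafe).card ≤ q
      · refine ⟨C ∩ Unsafe, Finset.inter_subset_right, hq,
          C ∩ Safe, Finset.inter_subset_left, ?_, by omega, ?_⟩
        · rw [Finset.disjoint_right]
          intro e he hes
          rw [Finset.mem_inter, hpart, Finset.mem_compl] at he
          exact he.2 (Finset.mem_inter.1 hes).2
        · intro e he
          rw [Finset.mem_sdiff, Finset.mem_inter] at he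
          rw [Finset.mem_inter]
          refine ⟨he.1, ?_⟩
          by_contra hns
          exact he.2 ⟨he.1, by rw [hpart, Finset.mem_compl]; exact hns⟩
      · obtain ⟨U, hU1, hU2⟩ := Finset.exists_subset_card_eq (s := C ∩ Unsafe) (n := q) (le_of_not_ge hq)
        have hUC : U ⊆ C := hU1.trans Finset.inter_subset_left
        refine ⟨U, hU1.trans Finset.inter_subset_right, hU2.le,
          C \ U, Finset.sdiff_subset, Finset.sdiff_disjoint, ?_, subset_rfl⟩
        rw [Finset.card_sdiff_of_subset hUC, hU2]
        omega
    have hDsub : D ⊆ H \ U := by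
      intro e he
      rw [Finset.mem_sdiff]
      exact ⟨cutEdges_subset g₁ g₂ H S (hDsubC he),
        Finset.disjoint_left.1 hDdisj he⟩
    have hconn := hf U hUsub hUcard D hDsub hDcard
    have hempty : cutEdges g₁ g₂ ((H \ U) \ D) S = ∅ := by
      rw [cutEdges_sdiff, cutEdges_sdiff, ← hC, Finset.sdiff_eq_empty_iff_subset]
      exact hCUD
    have hne := cut_nonempty_of_connectedIn' g₁ g₂ hconn hsep
    rw [hempty] at hne
    exact Finset.not_nonempty_empty hne
  · intro h U hUsub hUq D hDsub hDc
    apply connectedIn_of_cuts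
    intro S hu hv
    have hsep : (u ∈ S) ≠ (v ∈ S) := by simp [hu, hv]
    rw [cutEdges_sdiff, cutEdges_sdiff]
    set C := cutEdges g₁ g₂ H S with hC
    have h3 := Finset.le_card_sdiff D (C \ U)
    have hcard : 1 ≤ ((C \ U) \ D).card := by
      rcases h S hsep with hs | hc
      · rw [← hC] at hs
        have h1 : C ∩ Safe ⊆ C \ U := by
          intro e he
          rw [Finset.mem_inter] at he
          rw [Finset.mem_sdiff]
          refine ⟨he.1, fun heU => ?_⟩
          have := hUsub heU
          rw [hpart, Finset.mem_compl] at this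
          exact this he.2
        have h2 := Finset.card_le_card h1
        omega
      · rw [← hC] at hc
        have h2 := Finset.le_card_sdiff U C
        have h4 := Finset.card_le_card hUsub
        omega
    exact Finset.card_pos.1 hcard

end Aux

/-- Every terminal pair is `(p, q+1)`-flex-connected in `H ∪ H'` iff `H'` covers all
violated cuts. -/
theorem flex_augment_iff_covers_violated_cuts {V E : Type*} [Fintype V] [Fintype E]
    (g₁ g₂ : E → V) (Safe Unsafe : Finset E) (hpart : Unsafe = Safeᶜ)
    (p q : ℕ) (hp : 1 ≤ p) (k : ℕ) (st : Fin k → V × V) (H : Finset E)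
    (hH : ∀ i : Fin k, FlexConnected g₁ g₂ Unsafe p q H (st i).1 (st i).2)
    (H' : Finset E) (hH' : Disjoint H' H) :
    (∀ i : Fin k, FlexConnected g₁ g₂ Unsafe p (q + 1) (H ∪ H') (st i).1 (st i).2) ↔
      ∀ S : Finset V, Violated g₁ g₂ Safe p q st H S →
        (cutEdges g₁ g₂ H' S).Nonempty := by
  have hHc : ∀ i : Fin k, ∀ S : Finset V, ((st i).1 ∈ S) ≠ ((st i).2 ∈ S) →
      p ≤ (cutEdges g₁ g₂ H S ∩ Safe).card ∨ p + q ≤ (cutEdges g₁ g₂ H S).card :=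
    fun i => (flex_iff_cuts g₁ g₂ Safe Unsafe hpart p q hp H _ _).1 (hH i)
  constructor
  · intro hL S hviol
    obtain ⟨⟨i, hsep⟩, hcard, hsafe⟩ := hviol
    have hi := (flex_iff_cuts g₁ g₂ Safe Unsafe hpart p (q + 1) hp (H ∪ H') _ _).1
      (hL i) S hsep
    by_contra hne
    rw [Finset.not_nonempty_iff_eq_empty] at hne
    rw [cutEdges_union, hne, Finset.union_empty] at hi
    rcases hi with hi | hi <;> omega
  · intro hcov i
    rw [flex_iff_cuts g₁ g₂ Safe Unsafe hpart p (q + 1) hp]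
    intro S hsep
    rw [cutEdges_union]
    have hdisj : Disjoint (cutEdges g₁ g₂ H S) (cutEdges g₁ g₂ H' S) :=
      hH'.symm.mono (cutEdges_subset g₁ g₂ H S) (cutEdges_subset g₁ g₂ H' S)
    have hmono : p ≤ (cutEdges g₁ g₂ H S ∩ Safe).card →
        p ≤ ((cutEdges g₁ g₂ H S ∪ cutEdges g₁ g₂ H' S) ∩ Safe).card := fun hs =>
      hs.trans (Finset.card_le_card
        (Finset.inter_subset_inter Finset.subset_union_left subset_rfl))
    rcases hHc i S hsep with hs | hc
    · exact Or.inl (hmono hs)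
    · by_cases h1 : p + q + 1 ≤ (cutEdges g₁ g₂ H S).card
      · exact Or.inr (h1.trans (Finset.card_le_card Finset.subset_union_left))
      · by_cases h2 : (cutEdges g₁ g₂ H S ∩ Safe).card ≤ p - 1
        · have hv : Violated g₁ g₂ Safe p q st H S := ⟨⟨i, hsep⟩, by omega, h2⟩
          obtain ⟨e, he⟩ := hcov S hv
          have hpos : 1 ≤ (cutEdges g₁ g₂ H' S).card := Finset.card_pos.2 ⟨e, he⟩
          rw [Finset.card_union_of_disjoint hdisj]
          right
          omega
        · exact Or.inl (hmono (by omega))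
end

section
/- Let p ≥ 1 and q ≥ 0 be integers and let H' ⊆ E ∖ H. Then every terminal pair (s_i, t_i) is (p, q + 1)-flex-connected in H ∪ H' if and only if H' is a feasible augmentation for every violating edge set F. -/
open scoped Classical

lemma connectedIn_mono {V E : Type*} (g₁ g₂ : E → V) {K K' : Finset E} (hKK : K ⊆ K')
    {u v : V} (hc : ConnectedIn g₁ g₂ K u v) : ConnectedIn g₁ g₂ K' u v := by
  refine Relation.ReflTransGen.mono ?_ u v hc
  rintro a b ⟨e, he, hor⟩
  exact ⟨e, hKK he, hor⟩

/-- If no edge of `K` crosses `S`, connectivity in `K` preserves membership in `S`. -/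
lemma mem_iff_of_connectedIn {V E : Type*} [DecidableEq V] (g₁ g₂ : E → V) {K : Finset E}
    {S : Finset V} (hS : ∀ e ∈ K, ((g₁ e ∈ S) ↔ (g₂ e ∈ S))) {u v : V}
    (h : ConnectedIn g₁ g₂ K u v) : (u ∈ S ↔ v ∈ S) := by
  induction h with
  | refl => exact Iff.rfl
  | tail _ hbc ih =>
    obtain ⟨e, he, hor⟩ := hbc
    rcases hor with ⟨h1, h2⟩ | ⟨h1, h2⟩
    · exact ih.trans (h1 ▸ h2 ▸ hS e he)
    · exact ih.trans (h1 ▸ h2 ▸ (hS e he).symm)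

/-- Every terminal pair is `(p, q+1)`-flex-connected in `H ∪ H'` iff `H'` is a feasible
augmentation for every violating edge set `F`. -/
theorem flex_augment_iff_feasible_augmentation {V E : Type*} [Fintype V] [Fintype E]
    (g₁ g₂ : E → V) (Safe Unsafe : Finset E) (hpart : Unsafe = Safeᶜ)
    (p q : ℕ) (hp : 1 ≤ p) (k : ℕ) (st : Fin k → V × V) (H : Finset E)
    (hH : ∀ i : Fin k, FlexConnected g₁ g₂ Unsafe p q H (st i).1 (st i).2)
    (H' : Finset E) (hH' : Disjoint H' H) :
    (∀ i : Fin k, FlexConnected g₁ g₂ Unsafe p (q + 1) (H ∪ H') (st i).1 (st i).2) ↔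
      ∀ F : Finset E,
        (∃ S : Finset V, Violated g₁ g₂ Safe p q st H S ∧ F = cutEdges g₁ g₂ H S) →
        ∀ i : Fin k, ConnectedIn g₁ g₂ ((H ∪ H') \ F) (st i).1 (st i).2 := by
  constructor
  · -- forward direction
    rintro h F ⟨S, ⟨⟨_, hcard, hsafe⟩, rfl⟩⟩ i
    set F := cutEdges g₁ g₂ H S with hF
    have hFH : F ⊆ H := Finset.filter_subset _ _
    -- the unsafe part of F has at least q+1 edges
    have hsplit : (F \ Safe).card + (F ∩ Safe).card = F.card :=
      Finset.card_sdiff_add_card_inter F Safe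
    have hq1 : q + 1 ≤ (F \ Safe).card := by omega
    obtain ⟨U, hUsub, hUcard⟩ := Finset.exists_subset_card_eq hq1
    have hUF : U ⊆ F := hUsub.trans (Finset.sdiff_subset)
    have hUUnsafe : U ⊆ Unsafe := by
      intro e he
      have := hUsub he
      rw [Finset.mem_sdiff] at this
      rw [hpart, Finset.mem_compl]
      exact this.2
    set D := F \ U with hD
    have hDcard : D.card = p - 1 := by
      rw [hD, Finset.card_sdiff_of_subset hUF, hcard, hUcard]; omega
    have hDsub : D ⊆ (H ∪ H') \ U := by
      intro e he
      rw [hD, Finset.mem_sdiff] at he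
      rw [Finset.mem_sdiff]
      exact ⟨Finset.mem_union_left _ (hFH he.1), he.2⟩
    have hconn := h i U hUUnsafe (le_of_eq hUcard) D hDsub (le_of_eq hDcard)
    refine connectedIn_mono g₁ g₂ ?_ hconn
    intro e he
    rw [Finset.mem_sdiff, Finset.mem_sdiff] at he
    rw [Finset.mem_sdiff]
    refine ⟨he.1.1, fun heF => ?_⟩
    exact he.2 (by rw [hD, Finset.mem_sdiff]; exact ⟨heF, he.1.2⟩)
  · -- backward direction
    intro hfeas i U hUUnsafe hUcard D hDsub hDcard
    by_contra hnot
    set s := (st i).1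
    set t := (st i).2
    set K := ((H ∪ H') \ U) \ D with hK
    -- the reachable set from s in K
    set S : Finset V := Finset.univ.filter (fun v => ConnectedIn g₁ g₂ K s v) with hS
    have hsS : s ∈ S := by
      rw [hS, Finset.mem_filter]
      exact ⟨Finset.mem_univ _, Relation.ReflTransGen.refl⟩
    have htS : t ∉ S := by
      rw [hS, Finset.mem_filter]
      rintro ⟨-, hc⟩
      exact hnot hc
    -- K-edges do not cross S
    have hclosed : ∀ e ∈ K, ((g₁ e ∈ S) ↔ (g₂ e ∈ S)) := by
      intro e he
      simp only [hS, Finset.mem_filter, Finset.mem_univ, true_and]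
      constructor
      · intro hc
        exact hc.tail ⟨e, he, Or.inl ⟨rfl, rfl⟩⟩
      · intro hc
        exact hc.tail ⟨e, he, Or.inr ⟨rfl, rfl⟩⟩
    -- the cut of H ∪ H' at S is contained in U ∪ D
    have hcutUD : cutEdges g₁ g₂ (H ∪ H') S ⊆ U ∪ D := by
      intro e he
      rw [cutEdges, Finset.mem_filter] at he
      by_contra heUD
      rw [Finset.mem_union] at heUD
      
      have heK : e ∈ K := by
        rw [hK, Finset.mem_sdiff, Finset.mem_sdiff]
        exact ⟨⟨he.1, fun h => heUD (Or.inl h)⟩, fun h => heUD (Or.inr h)⟩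
      exact he.2 (propext (hclosed e heK))
    set Fh := cutEdges g₁ g₂ H S with hFh
    have hFhH : Fh ⊆ H := Finset.filter_subset _ _
    have hFhcut : Fh ⊆ cutEdges g₁ g₂ (H ∪ H') S :=
      Finset.filter_subset_filter _ Finset.subset_union_left
    have hFhUD : Fh ⊆ U ∪ D := hFhcut.trans hcutUD
    have hUDcard : (U ∪ D).card ≤ p + q := by
      calc (U ∪ D).card ≤ U.card + D.card := Finset.card_union_le U D
        _ ≤ p + q := by omega
    have hFhsafe : (Fh ∩ Safe).card ≤ p - 1 := by
      refine le_trans (Finset.card_le_card ?_) hDcard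
      intro e he
      rw [Finset.mem_inter] at he
      have := hFhUD he.1
      rw [Finset.mem_union] at this
      rcases this with h | h
      · exact absurd (hUUnsafe h) (by rw [hpart, Finset.mem_compl]; exact fun hn => hn he.2)
      · exact h
    -- |Fh| = p + q
    have hFhle : Fh.card ≤ p + q := le_trans (Finset.card_le_card hFhUD) hUDcard
    have hFhcard : Fh.card = p + q := by
      by_contra hne
      have hlt : Fh.card ≤ p + q - 1 := by omega
      -- use (p,q)-flex-connectivity of H to get a contradiction
      have hsplit : (Fh \ Safe).card + (Fh ∩ Safe).card = Fh.card :=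
        Finset.card_sdiff_add_card_inter Fh Safe
      obtain ⟨U', hU'sub, hU'card⟩ :=
        Finset.exists_subset_card_eq (min_le_right q (Fh \ Safe).card)
      have hU'Fh : U' ⊆ Fh := hU'sub.trans Finset.sdiff_subset
      have hU'Unsafe : U' ⊆ Unsafe := by
        intro e he
        have := hU'sub he
        rw [Finset.mem_sdiff] at this
        rw [hpart, Finset.mem_compl]
        exact this.2
      set D' := Fh \ U' with hD'
      have hD'card : D'.card ≤ p - 1 := by
        rw [hD', Finset.card_sdiff_of_subset hU'Fh, hU'card]
        omega
      have hD'sub : D' ⊆ H \ U' := by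
        intro e he
        rw [hD', Finset.mem_sdiff] at he
        rw [Finset.mem_sdiff]
        exact ⟨hFhH he.1, he.2⟩
      have hconn := hH i U' hU'Unsafe (by rw [hU'card]; exact min_le_left _ _) D' hD'sub hD'card
      have hconn' : ConnectedIn g₁ g₂ (H \ Fh) s t := by
        refine connectedIn_mono g₁ g₂ ?_ hconn
        intro e he
        rw [Finset.mem_sdiff, Finset.mem_sdiff] at he
        rw [Finset.mem_sdiff]
        refine ⟨he.1.1, fun heFh => ?_⟩
        exact he.2 (by rw [hD', Finset.mem_sdiff]; exact ⟨heFh, he.1.2⟩)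
      have : (s ∈ S ↔ t ∈ S) := by
        refine mem_iff_of_connectedIn g₁ g₂ ?_ hconn'
        intro e he
        rw [Finset.mem_sdiff] at he
        by_contra hcross
        refine he.2 ?_
        rw [hFh, cutEdges, Finset.mem_filter]
        exact ⟨he.1, fun h => hcross (iff_of_eq h)⟩
      exact htS (this.mp hsS)
    -- S is violated; apply feasibility
    have hviol : Violated g₁ g₂ Safe p q st H S :=
      ⟨⟨i, fun h => htS (h ▸ hsS)⟩, hFhcard.symm ▸ hFhcard, hFhsafe⟩
    have hconn := hfeas Fh ⟨S, hviol, rfl⟩ i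
    -- the full cut equals Fh, so no edge of (H ∪ H') \ Fh crosses S
    have hcuteq : cutEdges g₁ g₂ (H ∪ H') S = Fh := by
      refine (Finset.eq_of_subset_of_card_le hFhcut ?_).symm
      calc (cutEdges g₁ g₂ (H ∪ H') S).card ≤ (U ∪ D).card := Finset.card_le_card hcutUD
        _ ≤ p + q := hUDcard
        _ = Fh.card := hFhcard.symm
    have : (s ∈ S ↔ t ∈ S) := by
      refine mem_iff_of_connectedIn g₁ g₂ ?_ hconn
      intro e he
      rw [Finset.mem_sdiff] at he
      by_contra hcross
      refine he.2 ?_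
      rw [← hcuteq, cutEdges, Finset.mem_filter]
      exact ⟨he.1, fun h => hcross (iff_of_eq h)⟩
    exact htS (this.mp hsS)
end

section
/- Let x̃ : E → ℝ≥0 be edge capacities and let y be the induced tree-edge capacities. For every vertex set S ⊆ V(𝒯), letting S' = {M1(a) : a ∈ L ∩ S} be the set of M1-images of the leaves in S, we have Σ_{f ∈ δ_{E(𝒯)}(S)} y(f) ≥ Σ_{e ∈ δ_E(S')} x̃(e). -/
open scoped Classical

/-- `(t₁, t₂ : TE → TV)` describes a (multi)graph which is a tree: it is connected and
every edge is a bridge. -/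
def IsTree' {TV TE : Type*} [Fintype TE] (t₁ t₂ : TE → TV) : Prop :=
  (∀ a b : TV, ConnectedIn t₁ t₂ Finset.univ a b) ∧
    ∀ f : TE, ¬ ConnectedIn t₁ t₂ (Finset.univ \ {f}) (t₁ f) (t₂ f)

/-- `V_f`: the `M1`-images of the leaves (elements of `L`) lying in the connected component
of the tree with `f` deleted that contains the endpoint `t₁ f`. -/
noncomputable def compVerts {V TV TE : Type*} [Fintype TE] (t₁ t₂ : TE → TV)
    (M1 : TV → V) (L : Finset TV) (f : TE) : Finset V :=
  (L.filter fun a => ConnectedIn t₁ t₂ (Finset.univ \ {f}) a (t₁ f)).image M1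

/-- The capacity `y(f) = Σ_{e ∈ δ_E(V_f)} x(e)` induced on a tree edge `f` by
capacities `x` on the edges of `G`. -/
noncomputable def treeCap {V E TV TE : Type*} [Fintype E] [Fintype TE]
    (g₁ g₂ : E → V) (t₁ t₂ : TE → TV) (M1 : TV → V) (L : Finset TV)
    (x : E → NNReal) (f : TE) : NNReal :=
  ∑ e ∈ cutEdges g₁ g₂ Finset.univ (compVerts t₁ t₂ M1 L f), x e

/-- `M^{-1}(F)`: tree edges `f` with `M2(f) ∩ F ≠ ∅`. -/
noncomputable def Minv {E TE : Type*} [Fintype TE] (M2 : TE → Finset E) (F : Finset E) :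
    Finset TE :=
  Finset.univ.filter fun f => (M2 f ∩ F).Nonempty

/-- `M(E') = ⋃_{f ∈ E'} M2(f)`. -/
noncomputable def Mimg {E TE : Type*} (M2 : TE → Finset E) (E' : Finset TE) : Finset E :=
  E'.biUnion M2

/-- The connected component containing `v` of the graph on `V` with edge set `H`. -/
noncomputable def Qcomp {V E : Type*} [Fintype V] (g₁ g₂ : E → V) (H : Finset E) (v : V) :
    Finset V :=
  Finset.univ.filter fun u => ConnectedIn g₁ g₂ H u v

/-- A vertex set `Q` is shattered (w.r.t. the tree and `M^{-1}(F)`): the leaves whose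
`M1`-images lie in `Q` are not all in a single connected component of the tree with the
edges of `M^{-1}(F)` deleted. -/
def IsShattered {V E TV TE : Type*} [Fintype TE] (t₁ t₂ : TE → TV) (M1 : TV → V)
    (L : Finset TV) (M2 : TE → Finset E) (F : Finset E) (Q : Finset V) : Prop :=
  ∃ a ∈ L, ∃ b ∈ L, M1 a ∈ Q ∧ M1 b ∈ Q ∧
    ¬ ConnectedIn t₁ t₂ (Finset.univ \ Minv M2 F) a b

/-- `Z_F`: the pairs `(A ∪ Q_{s_i}, B ∪ Q_{t_i})` over `i ∈ [k]` and pairs `(A, B)`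
partitioning the union of the shattered components of `(V, H \ F)`, each shattered
component lying entirely in `A` or entirely in `B`, such that the two sets of the pair
are disjoint. -/
def ZF {V E TV TE : Type*} [Fintype V] [Fintype TE] (g₁ g₂ : E → V) (t₁ t₂ : TE → TV)
    (M1 : TV → V) (L : Finset TV) (M2 : TE → Finset E) {k : ℕ} (st : Fin k → V × V)
    (H F : Finset E) : Set (Finset V × Finset V) :=
  { P | ∃ i : Fin k, ∃ A B : Finset V,
      Disjoint A B ∧
      A ∪ B = Finset.univ.filter
        (fun v => IsShattered t₁ t₂ M1 L M2 F (Qcomp g₁ g₂ (H \ F) v)) ∧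
      (∀ v : V, IsShattered t₁ t₂ M1 L M2 F (Qcomp g₁ g₂ (H \ F) v) →
        Qcomp g₁ g₂ (H \ F) v ⊆ A ∨ Qcomp g₁ g₂ (H \ F) v ⊆ B) ∧
      P.1 = A ∪ Qcomp g₁ g₂ (H \ F) (st i).1 ∧
      P.2 = B ∪ Qcomp g₁ g₂ (H \ F) (st i).2 ∧
      Disjoint P.1 P.2 }

/-- The number of shattered connected components of `(V, H \ F)`. -/
noncomputable def shatteredCount {V E TV TE : Type*} [Fintype V] [Fintype TE]
    (g₁ g₂ : E → V) (t₁ t₂ : TE → TV) (M1 : TV → V) (L : Finset TV)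
    (M2 : TE → Finset E) (H F : Finset E) : ℕ :=
  ((Finset.univ.image fun v => Qcomp g₁ g₂ (H \ F) v).filter
    fun Q => IsShattered t₁ t₂ M1 L M2 F Q).card

section TreeAux

variable {TV TE : Type*} [Fintype TE] {t₁ t₂ : TE → TV}

lemma connectedIn_symm_s6 {H : Finset TE} {u v : TV}
    (h : ConnectedIn t₁ t₂ H u v) : ConnectedIn t₁ t₂ H v u := by
  unfold ConnectedIn at h ⊢
  induction h with
  | refl => exact Relation.ReflTransGen.refl
  | tail _ hab ih =>
    obtain ⟨e, he, hor⟩ := hab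
    exact Relation.ReflTransGen.head ⟨e, he, hor.symm⟩ ih

lemma connectedIn_trans {H : Finset TE} {u v w : TV}
    (h : ConnectedIn t₁ t₂ H u v) (h' : ConnectedIn t₁ t₂ H v w) :
    ConnectedIn t₁ t₂ H u w := Relation.ReflTransGen.trans h h'

lemma connectedIn_step {H : Finset TE} {e : TE} (he : e ∈ H) :
    ConnectedIn t₁ t₂ H (t₁ e) (t₂ e) :=
  Relation.ReflTransGen.single ⟨e, he, Or.inl ⟨rfl, rfl⟩⟩

/-- The side of the tree edge `f` containing `c` (true if on the `t₁ f` side). -/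
def Side (t₁ t₂ : TE → TV) (f : TE) (c : TV) : Prop :=
  ConnectedIn t₁ t₂ (Finset.univ \ {f}) c (t₁ f)

lemma side_total (htree : IsTree' t₁ t₂) (f : TE) (c : TV) :
    Side t₁ t₂ f c ∨ ConnectedIn t₁ t₂ (Finset.univ \ {f}) c (t₂ f) := by
  have h : ConnectedIn t₁ t₂ Finset.univ c (t₁ f) := htree.1 c (t₁ f)
  induction h using Relation.ReflTransGen.head_induction_on with
  | refl => exact Or.inl Relation.ReflTransGen.refl
  | head hstep _ ih =>
    rename_i a b _
    obtain ⟨e, -, hor⟩ := hstep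
    by_cases hef : e = f
    · subst hef
      rcases hor with ⟨h1, h2⟩ | ⟨h1, h2⟩
      · exact Or.inl (h1 ▸ Relation.ReflTransGen.refl)
      · exact Or.inr (h2 ▸ Relation.ReflTransGen.refl)
    · have hstep' : ConnectedIn t₁ t₂ (Finset.univ \ {f}) a b := by
        rcases hor with ⟨h1, h2⟩ | ⟨h1, h2⟩
        · exact h1 ▸ h2 ▸ connectedIn_step (by simp [hef])
        · exact connectedIn_symm_s6 (h1 ▸ h2 ▸ connectedIn_step (by simp [hef]))
      rcases ih with h' | h'
      · exact Or.inl (connectedIn_trans hstep' h')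
      · exact Or.inr (connectedIn_trans hstep' h')

lemma conn_iff_side (htree : IsTree' t₁ t₂) {f : TE} {c d : TV} :
    ConnectedIn t₁ t₂ (Finset.univ \ {f}) c d ↔ (Side t₁ t₂ f c ↔ Side t₁ t₂ f d) := by
  constructor
  · intro h
    exact ⟨fun hc => connectedIn_trans (connectedIn_symm_s6 h) hc,
      fun hd => connectedIn_trans h hd⟩
  · intro hiff
    rcases side_total htree f c with hc | hc
    · exact connectedIn_trans hc (connectedIn_symm_s6 (hiff.mp hc))
    · rcases side_total htree f d with hd | hd
      · exact absurd (connectedIn_trans (connectedIn_symm_s6 (hiff.mpr hd)) hc)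
          (fun h => htree.2 f h)
      · exact connectedIn_trans hc (connectedIn_symm_s6 hd)

lemma side_t₁ (f : TE) : Side t₁ t₂ f (t₁ f) := Relation.ReflTransGen.refl

lemma not_side_t₂ (htree : IsTree' t₁ t₂) (f : TE) : ¬ Side t₁ t₂ f (t₂ f) := by
  intro h
  exact htree.2 f (connectedIn_symm_s6 h)

/-- The set of "flip" edges of the tree (tree edges in the cut of `S`) separating
`c` from `d`. -/
noncomputable def FlipSep (t₁ t₂ : TE → TV) (S : Finset TV) (c d : TV) : Finset TE :=
  Finset.univ.filter fun f => ((t₁ f ∈ S) ≠ (t₂ f ∈ S)) ∧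
    ¬ ConnectedIn t₁ t₂ (Finset.univ \ {f}) c d

private lemma iff_of_not_iff {X W D : Prop} (h1 : ¬(X ↔ W)) (h2 : ¬(W ↔ D)) : X ↔ D := by
  tauto

set_option maxHeartbeats 1000000 in
lemma parity_main (htree : IsTree' t₁ t₂) (S : Finset TV) {c d : TV}
    (h : ConnectedIn t₁ t₂ Finset.univ c d) :
    ((c ∈ S) ↔ (d ∈ S)) ↔ Even (FlipSep t₁ t₂ S c d).card := by
  induction h with
  | refl =>
    have hempty : FlipSep t₁ t₂ S c c = ∅ := by
      ext f
      simp only [FlipSep, Finset.mem_filter, Finset.mem_univ, true_and,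
        Finset.notMem_empty, iff_false, not_and]
      intro _ hc
      exact hc Relation.ReflTransGen.refl
    simp [hempty]
  | tail hcw hstep ih =>
    rename_i w d
    obtain ⟨h', -, hor⟩ := hstep
    have hept : ((t₁ h' ∈ S) ↔ (t₂ h' ∈ S)) ↔ ((w ∈ S) ↔ (d ∈ S)) := by
      rcases hor with ⟨h1, h2⟩ | ⟨h1, h2⟩ <;> rw [h1, h2] <;> tauto
    have hsides : ¬ (Side t₁ t₂ h' w ↔ Side t₁ t₂ h' d) := by
      rcases hor with ⟨h1, h2⟩ | ⟨h1, h2⟩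
      · rw [← h1, ← h2]
        intro hx
        exact not_side_t₂ htree h' (hx.mp (side_t₁ h'))
      · rw [← h1, ← h2]
        intro hx
        exact not_side_t₂ htree h' (hx.mpr (side_t₁ h'))
    have hfne : ∀ f : TE, f ≠ h' →
        (f ∈ FlipSep t₁ t₂ S c d ↔ f ∈ FlipSep t₁ t₂ S c w) := by
      intro f hf
      have hwd : ConnectedIn t₁ t₂ (Finset.univ \ {f}) w d := by
        rcases hor with ⟨h1, h2⟩ | ⟨h1, h2⟩
        · exact h1 ▸ h2 ▸ connectedIn_step (by simp [Ne.symm hf])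
        · exact connectedIn_symm_s6 (h1 ▸ h2 ▸ connectedIn_step (by simp [Ne.symm hf]))
      simp only [FlipSep, Finset.mem_filter, Finset.mem_univ, true_and]
      constructor
      · rintro ⟨hfl, hsep⟩
        exact ⟨hfl, fun hcw' => hsep (connectedIn_trans hcw' hwd)⟩
      · rintro ⟨hfl, hsep⟩
        exact ⟨hfl, fun hcd' => hsep (connectedIn_trans hcd' (connectedIn_symm_s6 hwd))⟩
    by_cases hflip : (t₁ h' ∈ S) ≠ (t₂ h' ∈ S)
    · have hflip' : ¬ ((t₁ h' ∈ S) ↔ (t₂ h' ∈ S)) := by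
        simpa [ne_eq, eq_iff_iff] using hflip
      have hwd : ¬ ((w ∈ S) ↔ (d ∈ S)) := fun hx => hflip' (hept.mpr hx)
      have hh : (h' ∈ FlipSep t₁ t₂ S c d) ↔ ¬ (h' ∈ FlipSep t₁ t₂ S c w) := by
        simp only [FlipSep, Finset.mem_filter, Finset.mem_univ, true_and,
          conn_iff_side htree]
        constructor
        · rintro ⟨-, hPR⟩ ⟨-, hPQ⟩
          by_cases hP : Side t₁ t₂ h' c
          · by_cases hQ : Side t₁ t₂ h' w
            · exact hPQ ⟨fun _ => hQ, fun _ => hP⟩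
            · by_cases hR : Side t₁ t₂ h' d
              · exact hPR ⟨fun _ => hR, fun _ => hP⟩
              · exact hsides ⟨fun hq => absurd hq hQ, fun hr => absurd hr hR⟩
          · by_cases hQ : Side t₁ t₂ h' w
            · by_cases hR : Side t₁ t₂ h' d
              · exact hsides ⟨fun _ => hR, fun _ => hQ⟩
              · exact hPR ⟨fun hp => absurd hp hP, fun hr => absurd hr hR⟩
            · exact hPQ ⟨fun hp => absurd hp hP, fun hq => absurd hq hQ⟩
        · intro hx
          refine ⟨hflip, fun hPR => ?_⟩
          have hPQ : Side t₁ t₂ h' c ↔ Side t₁ t₂ h' w := by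
            by_contra hnPQ
            exact hx ⟨hflip, hnPQ⟩
          exact hsides (hPQ.symm.trans hPR)
      by_cases hmem : h' ∈ FlipSep t₁ t₂ S c w
      · have h2 : h' ∉ FlipSep t₁ t₂ S c d := fun hx => (hh.mp hx) hmem
        have h1 : FlipSep t₁ t₂ S c w = insert h' (FlipSep t₁ t₂ S c d) := by
          ext f
          rw [Finset.mem_insert]
          by_cases hf : f = h'
          · subst hf
            exact ⟨fun _ => Or.inl rfl, fun _ => hmem⟩
          · exact ⟨fun hx => Or.inr ((hfne f hf).mpr hx),
              fun hx => (hfne f hf).mp (hx.resolve_left hf)⟩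
        rw [h1, Finset.card_insert_of_notMem h2, Nat.even_add_one] at ih
        constructor
        · intro hXD
          by_contra hE
          exact hwd ((ih.mpr hE).symm.trans hXD)
        · intro hE
          exact iff_of_not_iff (fun h => ih.mp h hE) hwd
      · have h2 : h' ∈ FlipSep t₁ t₂ S c d := hh.mpr hmem
        have h1 : FlipSep t₁ t₂ S c d = insert h' (FlipSep t₁ t₂ S c w) := by
          ext f
          rw [Finset.mem_insert]
          by_cases hf : f = h'
          · subst hf
            exact ⟨fun _ => Or.inl rfl, fun _ => h2⟩
          · exact ⟨fun hx => Or.inr ((hfne f hf).mp hx),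
              fun hx => (hfne f hf).mpr (hx.resolve_left hf)⟩
        rw [h1, Finset.card_insert_of_notMem hmem, Nat.even_add_one]
        constructor
        · intro hXD hE
          exact hwd ((ih.mpr hE).symm.trans hXD)
        · intro hnE
          exact iff_of_not_iff (fun h => hnE (ih.mp h)) hwd
    · have hflip' : (t₁ h' ∈ S) ↔ (t₂ h' ∈ S) := by
        rw [← eq_iff_iff]
        exact not_ne_iff.mp hflip
      have hwd : (w ∈ S) ↔ (d ∈ S) := hept.mp hflip'
      have heq : FlipSep t₁ t₂ S c d = FlipSep t₁ t₂ S c w := by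
        ext f
        by_cases hf : f = h'
        · subst hf
          simp only [FlipSep, Finset.mem_filter, Finset.mem_univ, true_and]
          constructor <;> rintro ⟨hfl, -⟩ <;> exact absurd hfl hflip
        · exact hfne f hf
      rw [heq]
      exact ⟨fun h => ih.mp (h.trans hwd.symm), fun h => (ih.mpr h).trans hwd⟩

end TreeAux

private lemma sum_union_le' {β : Type*} [DecidableEq β] (A B : Finset β) (x : β → NNReal) :
    ∑ b ∈ A ∪ B, x b ≤ ∑ b ∈ A, x b + ∑ b ∈ B, x b := by
  rw [← Finset.union_sdiff_self_eq_union, Finset.sum_union Finset.disjoint_sdiff]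
  exact add_le_add le_rfl (Finset.sum_le_sum_of_subset (Finset.sdiff_subset))

private lemma sum_biUnion_le' {α β : Type*} [DecidableEq β] (s : Finset α)
    (C : α → Finset β) (x : β → NNReal) :
    ∑ b ∈ s.biUnion C, x b ≤ ∑ a ∈ s, ∑ b ∈ C a, x b := by
  classical
  induction s using Finset.induction_on with
  | empty => simp
  | insert a s hnm ih =>
    rw [Finset.biUnion_insert, Finset.sum_insert hnm]
    exact le_trans (sum_union_le' _ _ _) (add_le_add le_rfl ih)
/-- For every tree vertex set `S`, the induced tree capacity of the cut `δ_{E(𝒯)}(S)` is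
at least the capacity of the cut `δ_E(S')` in `G`, where `S'` is the set of `M1`-images
of the leaves in `S`. -/
theorem treeCut_ge_graphCut {V E TV TE : Type*} [Fintype V] [Fintype E] [Fintype TE]
    (g₁ g₂ : E → V) (t₁ t₂ : TE → TV) (htree : IsTree' t₁ t₂)
    (M1 : TV → V) (L : Finset TV) (hM1 : Set.BijOn M1 (↑L) Set.univ)
    (x : E → NNReal) (S : Finset TV) :
    ∑ e ∈ cutEdges g₁ g₂ Finset.univ ((L ∩ S).image M1), x e ≤
      ∑ f ∈ cutEdges t₁ t₂ Finset.univ S, treeCap g₁ g₂ t₁ t₂ M1 L x f := by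
  classical
  set S' := (L ∩ S).image M1 with hS'
  have hmemS' : ∀ c ∈ L, (M1 c ∈ S') ↔ c ∈ S := by
    intro c hc
    simp only [hS', Finset.mem_image, Finset.mem_inter]
    constructor
    · rintro ⟨c', ⟨hc'L, hc'S⟩, hcc⟩
      have := hM1.injOn (Finset.mem_coe.mpr hc'L) (Finset.mem_coe.mpr hc) hcc
      exact this ▸ hc'S
    · intro hcS
      exact ⟨c, ⟨hc, hcS⟩, rfl⟩
  have key : cutEdges g₁ g₂ Finset.univ S' ⊆
      (cutEdges t₁ t₂ Finset.univ S).biUnion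
        (fun f => cutEdges g₁ g₂ Finset.univ (compVerts t₁ t₂ M1 L f)) := by
    intro e he
    simp only [cutEdges, Finset.mem_filter, Finset.mem_univ, true_and] at he
    obtain ⟨a, haL, ha⟩ := hM1.surjOn (Set.mem_univ (g₁ e))
    obtain ⟨b, hbL, hb⟩ := hM1.surjOn (Set.mem_univ (g₂ e))
    have haL' : a ∈ L := Finset.mem_coe.mp haL
    have hbL' : b ∈ L := Finset.mem_coe.mp hbL
    have hab : ¬ ((a ∈ S) ↔ (b ∈ S)) := by
      intro hx
      apply he
      rw [eq_iff_iff, ← ha, ← hb, hmemS' a haL', hmemS' b hbL']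
      exact hx
    have hpar := parity_main htree S (htree.1 a b)
    have hcard : (FlipSep t₁ t₂ S a b).card ≠ 0 := by
      intro h0
      exact hab (hpar.mpr (by simp [h0]))
    obtain ⟨f, hf⟩ := Finset.card_pos.mp (Nat.pos_of_ne_zero hcard)
    simp only [FlipSep, Finset.mem_filter, Finset.mem_univ, true_and] at hf
    obtain ⟨hfflip, hfsep⟩ := hf
    have hVmem : ∀ c ∈ L, (M1 c ∈ compVerts t₁ t₂ M1 L f) ↔ Side t₁ t₂ f c := by
      intro c hc
      simp only [compVerts, Finset.mem_image, Finset.mem_filter]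
      constructor
      · rintro ⟨c', ⟨hc'L, hc'side⟩, hcc⟩
        have := hM1.injOn (Finset.mem_coe.mpr hc'L) (Finset.mem_coe.mpr hc) hcc
        exact this ▸ hc'side
      · intro hside
        exact ⟨c, ⟨hc, hside⟩, rfl⟩
    refine Finset.mem_biUnion.mpr ⟨f, ?_, ?_⟩
    · simp only [cutEdges, Finset.mem_filter, Finset.mem_univ, true_and]
      exact hfflip
    · simp only [cutEdges, Finset.mem_filter, Finset.mem_univ, true_and]
      intro heq
      rw [eq_iff_iff, ← ha, ← hb, hVmem a haL', hVmem b hbL'] at heq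
      exact hfsep ((conn_iff_side htree).mpr heq)
  calc ∑ e ∈ cutEdges g₁ g₂ Finset.univ S', x e
      ≤ ∑ e ∈ (cutEdges t₁ t₂ Finset.univ S).biUnion
          (fun f => cutEdges g₁ g₂ Finset.univ (compVerts t₁ t₂ M1 L f)), x e :=
        Finset.sum_le_sum_of_subset key
    _ ≤ ∑ f ∈ cutEdges t₁ t₂ Finset.univ S,
          ∑ e ∈ cutEdges g₁ g₂ Finset.univ (compVerts t₁ t₂ M1 L f), x e :=
        sum_biUnion_le' _ _ _
    _ = ∑ f ∈ cutEdges t₁ t₂ Finset.univ S, treeCap g₁ g₂ t₁ t₂ M1 L x f := rfl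
end

section
/- Let p ≥ 1 and q ≥ 0 be integers, let every terminal pair (s_i, t_i) be (p, q)-flex-connected in H, and let F = δ_H(S₀) be a violating edge set. Let 0 < α ≤ 1/2 and let x̃ : E → ℝ≥0 be capacities such that x̃(e) = α for every e ∈ H and such that Σ_{e ∈ δ_{E ∖ H}(S)} x̃(e) ≥ 1 for every violated vertex set S. Let y be the induced tree-edge capacities and suppose the tree is good for F, i.e. Σ_{f ∈ M^{-1}(F)} y(f) ≤ 1/2. Then for every (A, B) ∈ Z_F and every vertex set S ⊆ V(𝒯) such that every leaf with M1-image in A lies in S and no leaf with M1-image in B lies in S, we have Σ_{f ∈ δ_{E(𝒯)}(S), f ∉ M^{-1}(F)} y(f) ≥ α. -/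
open scoped Classical

section Aux

variable {V E : Type*} {g₁ g₂ : E → V}

theorem connRefl (H : Finset E) (a : V) : ConnectedIn g₁ g₂ H a a := Relation.ReflTransGen.refl

theorem connSymm {H : Finset E} {a b : V} (h : ConnectedIn g₁ g₂ H a b) :
    ConnectedIn g₁ g₂ H b a := by
  have hs : Symmetric (fun a b => ∃ e ∈ H, (g₁ e = a ∧ g₂ e = b) ∨ (g₁ e = b ∧ g₂ e = a)) := by
    rintro x y ⟨e, he, h'⟩
    exact ⟨e, he, h'.symm⟩
  exact (@Relation.ReflTransGen.stdSymm _ _ ⟨fun _ _ h => hs h⟩).symm _ _ h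

theorem connTrans {H : Finset E} {a b c : V} (h : ConnectedIn g₁ g₂ H a b)
    (h' : ConnectedIn g₁ g₂ H b c) : ConnectedIn g₁ g₂ H a c :=
  Relation.ReflTransGen.trans h h'

theorem connMono {H K : Finset E} (hHK : H ⊆ K) {a b : V} (h : ConnectedIn g₁ g₂ H a b) :
    ConnectedIn g₁ g₂ K a b := by
  refine Relation.ReflTransGen.mono ?_ _ _ h
  rintro x y ⟨e, he, h'⟩
  exact ⟨e, hHK he, h'⟩

theorem connMemIff {H : Finset E} {S : Finset V}
    (hno : ∀ e ∈ H, ((g₁ e ∈ S) ↔ (g₂ e ∈ S))) {a b : V}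
    (h : ConnectedIn g₁ g₂ H a b) : ((a ∈ S) ↔ (b ∈ S)) := by
  induction h with
  | refl => exact Iff.rfl
  | tail hsteps hstep ih =>
    obtain ⟨e, he, h1 | h1⟩ := hstep
    · have := hno e he
      rw [h1.1, h1.2] at this
      exact ih.trans this
    · have := hno e he
      rw [h1.1, h1.2] at this
      exact ih.trans this.symm

theorem connRemoveOr {H : Finset E} {d : E} {a b : V} (h : ConnectedIn g₁ g₂ H a b) :
    ConnectedIn g₁ g₂ (H \ {d}) a b ∨ ConnectedIn g₁ g₂ (H \ {d}) a (g₁ d) ∨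
      ConnectedIn g₁ g₂ (H \ {d}) a (g₂ d) := by
  induction h with
  | refl => exact Or.inl (connRefl _ _)
  | tail hsteps hstep ih =>
    rcases ih with ih | ih | ih
    · obtain ⟨e, he, h1⟩ := hstep
      by_cases hed : e = d
      · subst hed
        rcases h1 with ⟨h1, h2⟩ | ⟨h1, h2⟩
        · right; left; rw [h1]; exact ih
        · right; right; rw [h2]; exact ih
      · refine Or.inl (Relation.ReflTransGen.tail ih ⟨e, ?_, h1⟩)
        exact Finset.mem_sdiff.mpr ⟨he, by simp [hed]⟩
    · exact Or.inr (Or.inl ih)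
    · exact Or.inr (Or.inr ih)

end Aux

section TreeAux

variable {TV TE : Type*} [Fintype TE] {t₁ t₂ : TE → TV}

theorem sideTotal (htree : IsTree' t₁ t₂) (f : TE) (x : TV) :
    ConnectedIn t₁ t₂ (Finset.univ \ {f}) x (t₁ f) ∨
      ConnectedIn t₁ t₂ (Finset.univ \ {f}) x (t₂ f) := by
  rcases connRemoveOr (d := f) (htree.1 x (t₁ f)) with h | h | h
  · exact Or.inl h
  · exact Or.inl h
  · exact Or.inr h

theorem connIffSide (htree : IsTree' t₁ t₂) (f : TE) (a b : TV) :
    ConnectedIn t₁ t₂ (Finset.univ \ {f}) a b ↔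
      (ConnectedIn t₁ t₂ (Finset.univ \ {f}) a (t₁ f) ↔
        ConnectedIn t₁ t₂ (Finset.univ \ {f}) b (t₁ f)) := by
  constructor
  · intro h
    exact ⟨fun ha => connTrans (connSymm h) ha, fun hb => connTrans h hb⟩
  · intro hiff
    by_cases ha : ConnectedIn t₁ t₂ (Finset.univ \ {f}) a (t₁ f)
    · exact connTrans ha (connSymm (hiff.mp ha))
    · have hb : ¬ ConnectedIn t₁ t₂ (Finset.univ \ {f}) b (t₁ f) := fun hb => ha (hiff.mpr hb)
      rcases sideTotal htree f a with h | h
      · exact absurd h ha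
      rcases sideTotal htree f b with h' | h'
      · exact absurd h' hb
      exact connTrans h (connSymm h')

theorem connSdiff (htree : IsTree' t₁ t₂) {K : Finset TE} {d : TE} {a b : TV}
    (h : ConnectedIn t₁ t₂ K a b) (hd : ConnectedIn t₁ t₂ (Finset.univ \ {d}) a b) :
    ConnectedIn t₁ t₂ (K \ {d}) a b := by
  have hsub : K \ {d} ⊆ Finset.univ \ {d} :=
    Finset.sdiff_subset_sdiff (Finset.subset_univ K) Finset.Subset.rfl
  rcases connRemoveOr (d := d) h with h1 | hx | hx
  · exact h1
  all_goals rcases connRemoveOr (d := d) (connSymm h) with h1 | hy | hy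
  · exact connSymm h1
  · exact connTrans hx (connSymm hy)
  · exfalso
    exact htree.2 d (connTrans (connSymm (connMono hsub hx))
      (connTrans hd (connMono hsub hy)))
  · exact connSymm h1
  · exfalso
    exact htree.2 d (connTrans (connSymm (connMono hsub hy))
      (connTrans (connSymm hd) (connMono hsub hx)))
  · exact connTrans hx (connSymm hy)

theorem connDeleteMany (htree : IsTree' t₁ t₂) {a b : TV} (D : Finset TE)
    (hD : ∀ d ∈ D, ConnectedIn t₁ t₂ (Finset.univ \ {d}) a b) :
    ConnectedIn t₁ t₂ (Finset.univ \ D) a b := by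
  induction D using Finset.induction with
  | empty => simpa using htree.1 a b
  | insert _ _ hd ih =>
    rename_i d D'
    have h1 := ih (fun e he => hD e (Finset.mem_insert_of_mem he))
    have h2 := hD d (Finset.mem_insert_self d D')
    have h3 := connSdiff htree h1 h2
    have heq : (Finset.univ \ D') \ {d} = Finset.univ \ insert d D' := by
      ext y; simp only [Finset.mem_sdiff, Finset.mem_singleton, Finset.mem_insert,
        Finset.mem_univ, true_and]
      tauto
    rwa [heq] at h3

theorem existsCrossingSep (htree : IsTree' t₁ t₂) {S : Finset TV} {a b : TV}
    (ha : a ∈ S) (hb : b ∉ S) :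
    ∃ f : TE, ((t₁ f ∈ S) ≠ (t₂ f ∈ S)) ∧ ¬ ConnectedIn t₁ t₂ (Finset.univ \ {f}) a b := by
  by_contra hcon
  push_neg at hcon
  have hall : ∀ d ∈ Finset.univ.filter (fun f => (t₁ f ∈ S) ≠ (t₂ f ∈ S)),
      ConnectedIn t₁ t₂ (Finset.univ \ {d}) a b :=
    fun d hd => hcon d (Finset.mem_filter.mp hd).2
  have hconn := connDeleteMany htree _ hall
  have hiff := connMemIff (S := S) ?_ hconn
  · exact hb (hiff.mp ha)
  · intro e he
    have h1 : ¬ ((t₁ e ∈ S) ≠ (t₂ e ∈ S)) := by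
      have := (Finset.mem_sdiff.mp he).2
      simpa using this
    exact iff_of_eq (not_ne_iff.mp h1)

end TreeAux


/-- On a good tree for a violating edge set `F`, for every pair `(A, B) ∈ Z_F` and every
tree vertex set `S` containing all leaves with `M1`-image in `A` and no leaf with
`M1`-image in `B`, the tree cut `δ_{E(𝒯)}(S)` has capacity at least `α` outside
`M⁻¹(F)`. -/
theorem flow_for_each_pair {V E TV TE : Type*} [Fintype V] [Fintype E] [Fintype TE]
    (g₁ g₂ : E → V) (Safe Unsafe : Finset E) (hpart : Unsafe = Safeᶜ)
    (t₁ t₂ : TE → TV) (htree : IsTree' t₁ t₂)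
    (M1 : TV → V) (L : Finset TV) (hM1 : Set.BijOn M1 (↑L) Set.univ)
    (M2 : TE → Finset E)
    (hM2 : ∀ f : TE, ConnectedIn g₁ g₂ (M2 f) (M1 (t₁ f)) (M1 (t₂ f)))
    (p q : ℕ) (hp : 1 ≤ p) (k : ℕ) (st : Fin k → V × V) (H : Finset E)
    (hH : ∀ i : Fin k, FlexConnected g₁ g₂ Unsafe p q H (st i).1 (st i).2)
    (S₀ : Finset V) (hS₀ : Violated g₁ g₂ Safe p q st H S₀)
    (F : Finset E) (hF : F = cutEdges g₁ g₂ H S₀)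
    (α : NNReal) (hα0 : 0 < α) (hα : α ≤ 1 / 2)
    (x : E → NNReal) (hxH : ∀ e ∈ H, x e = α)
    (hLP : ∀ S : Finset V, Violated g₁ g₂ Safe p q st H S →
      1 ≤ ∑ e ∈ cutEdges g₁ g₂ Hᶜ S, x e)
    (hgood : ∑ f ∈ Minv M2 F, treeCap g₁ g₂ t₁ t₂ M1 L x f ≤ 1 / 2) :
    ∀ P ∈ ZF g₁ g₂ t₁ t₂ M1 L M2 st H F, ∀ S : Finset TV,
      (∀ a ∈ L, M1 a ∈ P.1 → a ∈ S) → (∀ a ∈ L, M1 a ∈ P.2 → a ∉ S) →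
      α ≤ ∑ f ∈ cutEdges t₁ t₂ Finset.univ S \ Minv M2 F,
            treeCap g₁ g₂ t₁ t₂ M1 L x f := by
  rintro P hP S hSA hSB
  obtain ⟨i, A, B, hdisjAB, hABeq, hshat, hP1, hP2, hPdisj⟩ := hP
  -- leaf inverse
  have hsurj : ∀ v : V, ∃ a, a ∈ L ∧ M1 a = v := by
    intro v
    obtain ⟨a, haL, ha⟩ := hM1.surjOn (Set.mem_univ v)
    exact ⟨a, haL, ha⟩
  choose ℓ hℓL hℓ using hsurj
  set SV : Finset V := (L ∩ S).image M1 with hSVdef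
  have hmemSV : ∀ v : V, v ∈ SV ↔ ℓ v ∈ S := by
    intro v
    constructor
    · intro hv
      obtain ⟨a, ha, hav⟩ := Finset.mem_image.mp hv
      have haL : a ∈ L := (Finset.mem_inter.mp ha).1
      have heq : a = ℓ v := hM1.injOn haL (hℓL v) (by rw [hav, hℓ])
      rw [← heq]; exact (Finset.mem_inter.mp ha).2
    · intro h
      exact Finset.mem_image.mpr ⟨ℓ v, Finset.mem_inter.mpr ⟨hℓL v, h⟩, hℓ v⟩
  have hP1SV : ∀ v ∈ P.1, v ∈ SV := fun v hv =>
    (hmemSV v).mpr (hSA (ℓ v) (hℓL v) (by rw [hℓ]; exact hv))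
  have hP2SV : ∀ v ∈ P.2, v ∉ SV := fun v hv h =>
    hSB (ℓ v) (hℓL v) (by rw [hℓ]; exact hv) ((hmemSV v).mp h)
  have memQself : ∀ v : V, v ∈ Qcomp g₁ g₂ (H \ F) v :=
    fun v => Finset.mem_filter.mpr ⟨Finset.mem_univ v, connRefl _ _⟩
  have memQiff : ∀ u v : V, u ∈ Qcomp g₁ g₂ (H \ F) v ↔ ConnectedIn g₁ g₂ (H \ F) u v := by
    intro u v
    simp [Qcomp]
  have hmemComp : ∀ (f : TE) (v : V), v ∈ compVerts t₁ t₂ M1 L f ↔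
      ConnectedIn t₁ t₂ (Finset.univ \ {f}) (ℓ v) (t₁ f) := by
    intro f v
    constructor
    · intro hv
      obtain ⟨a, ha, hav⟩ := Finset.mem_image.mp hv
      obtain ⟨haL, hconn⟩ := Finset.mem_filter.mp ha
      have heq : a = ℓ v := hM1.injOn haL (hℓL v) (by rw [hav, hℓ])
      rwa [heq] at hconn
    · intro h
      exact Finset.mem_image.mpr ⟨ℓ v, Finset.mem_filter.mpr ⟨hℓL v, h⟩, hℓ v⟩
  -- leaf separation with tree-cut membership
  have sep2 : ∀ u v : V, u ∈ SV → v ∉ SV → ∃ f ∈ cutEdges t₁ t₂ Finset.univ S,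
      ¬ ConnectedIn t₁ t₂ (Finset.univ \ {f}) (ℓ u) (ℓ v) := by
    intro u v hu hv
    obtain ⟨f, hfcross, hfsep⟩ := existsCrossingSep htree ((hmemSV u).mp hu)
      (fun h => hv ((hmemSV v).mpr h))
    exact ⟨f, Finset.mem_filter.mpr ⟨Finset.mem_univ f, hfcross⟩, hfsep⟩
  have sepCut : ∀ (f : TE) (u v : V), ¬ ConnectedIn t₁ t₂ (Finset.univ \ {f}) (ℓ u) (ℓ v) →
      (u ∈ compVerts t₁ t₂ M1 L f) ≠ (v ∈ compVerts t₁ t₂ M1 L f) := by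
    intro f u v hfsep h
    exact hfsep ((connIffSide htree f _ _).mpr
      ((hmemComp f u).symm.trans ((iff_of_eq h).trans (hmemComp f v))))
  by_cases hcase : (cutEdges g₁ g₂ (H \ F) SV).Nonempty
  · -- Case 1: an edge of H \ F crosses SV
    obtain ⟨e, he⟩ := hcase
    have heHF : e ∈ H \ F := (Finset.mem_filter.mp he).1
    have heH : e ∈ H := (Finset.mem_sdiff.mp heHF).1
    have hcross : (g₁ e ∈ SV) ≠ (g₂ e ∈ SV) := (Finset.mem_filter.mp he).2
    have key : ∀ u v : V, ConnectedIn g₁ g₂ (H \ F) u v → u ∈ SV → v ∉ SV →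
        ∃ f ∈ cutEdges t₁ t₂ Finset.univ S \ Minv M2 F,
          ((u ∈ compVerts t₁ t₂ M1 L f) ≠ (v ∈ compVerts t₁ t₂ M1 L f)) := by
      intro u v huv hu hv
      have hnotsh : ¬ IsShattered t₁ t₂ M1 L M2 F (Qcomp g₁ g₂ (H \ F) u) := by
        intro hsh
        rcases hshat u hsh with hA | hB
        · have hvA : v ∈ P.1 := by
            rw [hP1]
            exact Finset.mem_union_left _ (hA ((memQiff v u).mpr (connSymm huv)))
          exact hv (hP1SV v hvA)
        · have huB : u ∈ P.2 := by
            rw [hP2]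
            exact Finset.mem_union_left _ (hB (memQself u))
          exact hP2SV u huB hu
      have htconn : ConnectedIn t₁ t₂ (Finset.univ \ Minv M2 F) (ℓ u) (ℓ v) := by
        by_contra hc
        exact hnotsh ⟨ℓ u, hℓL u, ℓ v, hℓL v, by rw [hℓ]; exact memQself u,
          by rw [hℓ]; exact (memQiff v u).mpr (connSymm huv), hc⟩
      obtain ⟨f, hfcut, hfsep⟩ := sep2 u v hu hv
      have hfnot : f ∉ Minv M2 F := by
        intro hf
        exact hfsep (connMono (Finset.sdiff_subset_sdiff (Finset.Subset.refl _)
          (Finset.singleton_subset_iff.mpr hf)) htconn)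
      exact ⟨f, Finset.mem_sdiff.mpr ⟨hfcut, hfnot⟩, sepCut f u v hfsep⟩
    have hconn_e : ConnectedIn g₁ g₂ (H \ F) (g₁ e) (g₂ e) :=
      Relation.ReflTransGen.single ⟨e, heHF, Or.inl ⟨rfl, rfl⟩⟩
    have hexist : ∃ f ∈ cutEdges t₁ t₂ Finset.univ S \ Minv M2 F,
        e ∈ cutEdges g₁ g₂ Finset.univ (compVerts t₁ t₂ M1 L f) := by
      by_cases h1 : g₁ e ∈ SV
      · have h2 : g₂ e ∉ SV := fun h2 => hcross (propext (iff_of_true h1 h2))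
        obtain ⟨f, hf, hm⟩ := key (g₁ e) (g₂ e) hconn_e h1 h2
        exact ⟨f, hf, Finset.mem_filter.mpr ⟨Finset.mem_univ e, hm⟩⟩
      · have h2 : g₂ e ∈ SV :=
          Classical.byContradiction fun h2 => hcross (propext (iff_of_false h1 h2))
        obtain ⟨f, hf, hm⟩ := key (g₂ e) (g₁ e) (connSymm hconn_e) h2 h1
        exact ⟨f, hf, Finset.mem_filter.mpr ⟨Finset.mem_univ e, hm.symm⟩⟩
    obtain ⟨f, hf, hecut⟩ := hexist
    calc α = x e := (hxH e heH).symm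
      _ ≤ treeCap g₁ g₂ t₁ t₂ M1 L x f :=
          Finset.single_le_sum (fun _ _ => zero_le) hecut
      _ ≤ ∑ f ∈ cutEdges t₁ t₂ Finset.univ S \ Minv M2 F, treeCap g₁ g₂ t₁ t₂ M1 L x f :=
          Finset.single_le_sum (fun _ _ => zero_le) hf
  · -- Case 2: all H-edges crossing SV lie in F; SV is violated
    have hsubF : cutEdges g₁ g₂ H SV ⊆ F := by
      intro e he
      by_contra henF
      exact hcase ⟨e, Finset.mem_filter.mpr ⟨Finset.mem_sdiff.mpr
        ⟨(Finset.mem_filter.mp he).1, henF⟩, (Finset.mem_filter.mp he).2⟩⟩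
    have hsiP : (st i).1 ∈ P.1 := by
      rw [hP1]
      exact Finset.mem_union_right _ (memQself _)
    have htiP : (st i).2 ∈ P.2 := by
      rw [hP2]
      exact Finset.mem_union_right _ (memQself _)
    have hsi : (st i).1 ∈ SV := hP1SV _ hsiP
    have hti : (st i).2 ∉ SV := hP2SV _ htiP
    obtain ⟨-, hFcard, hFsafe⟩ := hS₀
    rw [← hF] at hFcard hFsafe
    have hdisc : ∀ K : Finset E, (∀ e ∈ K, ¬ ((g₁ e ∈ SV) ≠ (g₂ e ∈ SV))) →
        ¬ ConnectedIn g₁ g₂ K (st i).1 (st i).2 := by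
      intro K hK hconn
      have hiff := connMemIff (S := SV)
        (fun e he => iff_of_eq (not_ne_iff.mp (hK e he))) hconn
      exact hti (hiff.mp hsi)
    set C : Finset E := cutEdges g₁ g₂ H SV with hCdef
    have hCsub : C ⊆ H := Finset.filter_subset _ _
    have hCcard : p + q ≤ C.card := by
      by_contra hlt
      push_neg at hlt
      set U : Finset E := C ∩ Unsafe with hUdef
      by_cases hU : U.card ≤ q
      · have hPE := hH i U Finset.inter_subset_right hU
        have hDsub : C ∩ Safe ⊆ H \ U := by
          intro e he
          refine Finset.mem_sdiff.mpr ⟨hCsub (Finset.mem_inter.mp he).1, ?_⟩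
          intro heU
          have hun : e ∈ Unsafe := (Finset.mem_inter.mp heU).2
          rw [hpart] at hun
          exact (Finset.mem_compl.mp hun) (Finset.mem_inter.mp he).2
        have hDcard : (C ∩ Safe).card ≤ p - 1 :=
          le_trans (Finset.card_le_card (Finset.inter_subset_inter hsubF Finset.Subset.rfl))
            hFsafe
        have hD := hPE (C ∩ Safe) hDsub hDcard
        refine hdisc _ ?_ hD
        intro e he hne
        have heC : e ∈ C := Finset.mem_filter.mpr
          ⟨(Finset.mem_sdiff.mp (Finset.mem_sdiff.mp he).1).1, hne⟩
        by_cases hsafe : e ∈ Safe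
        · exact (Finset.mem_sdiff.mp he).2 (Finset.mem_inter.mpr ⟨heC, hsafe⟩)
        · exact (Finset.mem_sdiff.mp (Finset.mem_sdiff.mp he).1).2
            (Finset.mem_inter.mpr ⟨heC, by rw [hpart]; exact Finset.mem_compl.mpr hsafe⟩)
      · push_neg at hU
        obtain ⟨U', hU'sub, hU'card⟩ := Finset.exists_subset_card_eq (le_of_lt hU)
        have hPE := hH i U' (hU'sub.trans Finset.inter_subset_right) (le_of_eq hU'card)
        have hU'C : U' ⊆ C := hU'sub.trans Finset.inter_subset_left
        have hDcard : (C \ U').card ≤ p - 1 := by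
          rw [Finset.card_sdiff_of_subset hU'C, hU'card]
          omega
        have hDsub : C \ U' ⊆ H \ U' := Finset.sdiff_subset_sdiff hCsub Finset.Subset.rfl
        have hD := hPE (C \ U') hDsub hDcard
        refine hdisc _ ?_ hD
        intro e he hne
        have heC : e ∈ C := Finset.mem_filter.mpr
          ⟨(Finset.mem_sdiff.mp (Finset.mem_sdiff.mp he).1).1, hne⟩
        by_cases h' : e ∈ U'
        · exact (Finset.mem_sdiff.mp (Finset.mem_sdiff.mp he).1).2 h'
        · exact (Finset.mem_sdiff.mp he).2 (Finset.mem_sdiff.mpr ⟨heC, h'⟩)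
    have hCF : C = F := Finset.eq_of_subset_of_card_le hsubF (by rw [hFcard]; exact hCcard)
    have hviol : Violated g₁ g₂ Safe p q st H SV := by
      refine ⟨⟨i, fun h => hti (h ▸ hsi)⟩, ?_, ?_⟩
      · rw [← hCdef, hCF]; exact hFcard
      · rw [← hCdef, hCF]; exact hFsafe
    have hLPS := hLP SV hviol
    -- assignment of tree edges to crossing non-H edges
    have hasg : ∀ e ∈ cutEdges g₁ g₂ Hᶜ SV, ∃ f ∈ cutEdges t₁ t₂ Finset.univ S,
        e ∈ cutEdges g₁ g₂ Finset.univ (compVerts t₁ t₂ M1 L f) := by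
      intro e he
      have hcr : (g₁ e ∈ SV) ≠ (g₂ e ∈ SV) := (Finset.mem_filter.mp he).2
      by_cases h1 : g₁ e ∈ SV
      · have h2 : g₂ e ∉ SV := fun h2 => hcr (propext (iff_of_true h1 h2))
        obtain ⟨f, hf, hsep⟩ := sep2 _ _ h1 h2
        exact ⟨f, hf, Finset.mem_filter.mpr ⟨Finset.mem_univ e, sepCut f _ _ hsep⟩⟩
      · have h2 : g₂ e ∈ SV :=
          Classical.byContradiction fun h2 => hcr (propext (iff_of_false h1 h2))
        obtain ⟨f, hf, hsep⟩ := sep2 _ _ h2 h1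
        exact ⟨f, hf, Finset.mem_filter.mpr ⟨Finset.mem_univ e, (sepCut f _ _ hsep).symm⟩⟩
    have hsne : (cutEdges g₁ g₂ Hᶜ SV).Nonempty := by
      by_contra h
      rw [Finset.not_nonempty_iff_eq_empty] at h
      rw [h, Finset.sum_empty] at hLPS
      exact absurd hLPS (by norm_num)
    have hTEne : Nonempty TE := by
      obtain ⟨e, he⟩ := hsne
      obtain ⟨f, -, -⟩ := hasg e he
      exact ⟨f⟩
    choose! φ hφ1 hφ2 using hasg
    have fiber_bound : ∀ (A' : Finset TE) (T : Finset E), T ⊆ cutEdges g₁ g₂ Hᶜ SV →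
        (∀ e ∈ T, φ e ∈ A') →
        ∑ e ∈ T, x e ≤ ∑ f ∈ A', treeCap g₁ g₂ t₁ t₂ M1 L x f := by
      intro A' T hTs hTA
      rw [← Finset.sum_fiberwise_of_maps_to hTA x]
      refine Finset.sum_le_sum ?_
      intro f hf
      refine Finset.sum_le_sum_of_subset ?_
      intro e he
      obtain ⟨heT, hef⟩ := Finset.mem_filter.mp he
      have := hφ2 e (hTs heT)
      rwa [hef] at this
    set s : Finset E := cutEdges g₁ g₂ Hᶜ SV with hsdef
    set T1 : Finset E := s.filter (fun e => φ e ∈ Minv M2 F) with hT1def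
    set T2 : Finset E := s.filter (fun e => φ e ∉ Minv M2 F) with hT2def
    have hA : ∑ e ∈ T1, x e ≤ 1 / 2 := by
      refine le_trans (fiber_bound (Minv M2 F) T1 (Finset.filter_subset _ _) ?_) hgood
      intro e he
      exact (Finset.mem_filter.mp he).2
    have hB : ∑ e ∈ T2, x e ≤
        ∑ f ∈ cutEdges t₁ t₂ Finset.univ S \ Minv M2 F, treeCap g₁ g₂ t₁ t₂ M1 L x f := by
      refine fiber_bound _ T2 (Finset.filter_subset _ _) ?_
      intro e he
      exact Finset.mem_sdiff.mpr ⟨hφ1 e (Finset.filter_subset _ _ he),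
        (Finset.mem_filter.mp he).2⟩
    have hsum : ∑ e ∈ T1, x e + ∑ e ∈ T2, x e = ∑ e ∈ s, x e :=
      Finset.sum_filter_add_sum_filter_not s _ x
    have h1 : (1 : NNReal) ≤ ∑ e ∈ T1, x e + ∑ e ∈ T2, x e := by
      rw [hsum]; exact hLPS
    have h2 : (1 : NNReal) ≤ 1 / 2 +
        ∑ f ∈ cutEdges t₁ t₂ Finset.univ S \ Minv M2 F, treeCap g₁ g₂ t₁ t₂ M1 L x f :=
      le_trans h1 (add_le_add hA hB)
    refine le_trans hα ?_
    have h3 : (1 : NNReal) / 2 + 1 / 2 ≤ 1 / 2 +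
        ∑ f ∈ cutEdges t₁ t₂ Finset.univ S \ Minv M2 F, treeCap g₁ g₂ t₁ t₂ M1 L x f := by
      rw [show (1 : NNReal) / 2 + 1 / 2 = 1 by rw [← NNReal.coe_inj]; push_cast; norm_num]
      exact h2
    exact le_of_add_le_add_left h3
end

section
/- Let p ≥ 1 and q ≥ 0 be integers, let β > 0 be a real number, and set α = 1/(4(p+q)β). Let x̃ : E → ℝ≥0 be capacities with x̃(e) ≥ α for every e ∈ H, let y be the induced tree-edge capacities, and let F ⊆ H. If the tree is good for F, i.e. Σ_{f ∈ M^{-1}(F)} y(f) ≤ 1/2, then the number ℓ of shattered components of Q_F satisfies ℓ ≤ 2(p+q)β, and consequently |Z_F| ≤ 2^{2(p+q)β} · k. -/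
open scoped Classical

section Helpers
variable {V E : Type*} {g₁ g₂ : E → V}

lemma ConnectedIn.trans' {H : Finset E} {u v w : V} (h : ConnectedIn g₁ g₂ H u v)
    (h' : ConnectedIn g₁ g₂ H v w) : ConnectedIn g₁ g₂ H u w :=
  Relation.ReflTransGen.trans h h'

lemma ConnectedIn.symm' {H : Finset E} {u v : V} (h : ConnectedIn g₁ g₂ H u v) :
    ConnectedIn g₁ g₂ H v u := by
  induction h with
  | refl => exact .refl
  | tail _ hstep ih =>
      refine Relation.ReflTransGen.trans (Relation.ReflTransGen.single ?_) ih
      obtain ⟨e, he, h1 | h2⟩ := hstep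
      · exact ⟨e, he, Or.inr h1⟩
      · exact ⟨e, he, Or.inl h2⟩

lemma ConnectedIn.mono {H H' : Finset E} (hs : H ⊆ H') {u v : V}
    (h : ConnectedIn g₁ g₂ H u v) : ConnectedIn g₁ g₂ H' u v := by
  induction h with
  | refl => exact .refl
  | tail _ hstep ih =>
      obtain ⟨e, he, ho⟩ := hstep
      exact ih.tail ⟨e, hs he, ho⟩

lemma crossing_edge {H : Finset E} (P : V → Prop) {u v : V}
    (h : ConnectedIn g₁ g₂ H u v) (hne : ¬ (P u ↔ P v)) :
    ∃ e ∈ H, (¬ (P (g₁ e) ↔ P (g₂ e))) ∧ ConnectedIn g₁ g₂ H u (g₁ e) := by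
  induction h with
  | refl => exact absurd Iff.rfl hne
  | @tail b c hwalk hstep ih =>
      by_cases hub : P u ↔ P b
      · obtain ⟨e, he, ho⟩ := hstep
        refine ⟨e, he, ?_, ?_⟩
        · rcases ho with ⟨h1, h2⟩ | ⟨h1, h2⟩
          · rw [h1, h2]; exact fun hiff => hne (hub.trans hiff)
          · rw [h1, h2]; exact fun hiff => hne (hub.trans hiff.symm)
        · rcases ho with ⟨h1, h2⟩ | ⟨h1, h2⟩
          · rw [h1]; exact hwalk
          · rw [h1]; exact hwalk.tail ⟨e, he, Or.inr ⟨h1, h2⟩⟩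
      · exact ih hub

lemma bridge_cases {H : Finset E} {f : E} {u v : V}
    (h : ConnectedIn g₁ g₂ H u v) :
    ConnectedIn g₁ g₂ (H \ {f}) u v ∨
      (ConnectedIn g₁ g₂ (H \ {f}) u (g₁ f) ∧ ConnectedIn g₁ g₂ (H \ {f}) v (g₂ f)) ∨
      (ConnectedIn g₁ g₂ (H \ {f}) u (g₂ f) ∧ ConnectedIn g₁ g₂ (H \ {f}) v (g₁ f)) := by
  induction h with
  | refl => exact Or.inl .refl
  | @tail b c hwalk hstep ih =>
      obtain ⟨e, he, ho⟩ := hstep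
      by_cases hef : e = f
      · subst hef
        rcases ho with ⟨h1, h2⟩ | ⟨h1, h2⟩
        · subst h1; subst h2
          rcases ih with h | ⟨ha, hb⟩ | ⟨ha, hb⟩
          · exact Or.inr (Or.inl ⟨h, .refl⟩)
          · exact Or.inl (ha.trans' hb)
          · exact Or.inl ha
        · subst h1; subst h2
          rcases ih with h | ⟨ha, hb⟩ | ⟨ha, hb⟩
          · exact Or.inr (Or.inr ⟨h, .refl⟩)
          · exact Or.inl ha
          · exact Or.inl (ha.trans' hb)
      · have sc : ConnectedIn g₁ g₂ (H \ {f}) b c :=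
          Relation.ReflTransGen.single ⟨e, Finset.mem_sdiff.2 ⟨he, by simp [hef]⟩, ho⟩
        rcases ih with h | ⟨ha, hb⟩ | ⟨ha, hb⟩
        · exact Or.inl (h.trans' sc)
        · exact Or.inr (Or.inl ⟨ha, sc.symm'.trans' hb⟩)
        · exact Or.inr (Or.inr ⟨ha, sc.symm'.trans' hb⟩)

lemma helly {H : Finset E} {f₀ f : E} {u v : V}
    (hbr : ¬ ConnectedIn g₁ g₂ (H \ {f}) (g₁ f) (g₂ f))
    (h₀ : ConnectedIn g₁ g₂ (H \ {f₀}) u v)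
    (h₁ : ConnectedIn g₁ g₂ (H \ {f}) u v) :
    ConnectedIn g₁ g₂ ((H \ {f₀}) \ {f}) u v := by
  have hsub : (H \ {f₀}) \ {f} ⊆ H \ {f} := by
    intro e he
    simp only [Finset.mem_sdiff] at he ⊢
    exact ⟨he.1.1, he.2⟩
  rcases bridge_cases (f := f) h₀ with h | ⟨ha, hb⟩ | ⟨ha, hb⟩
  · exact h
  · exact absurd (((ha.mono hsub).symm'.trans' h₁).trans' (hb.mono hsub)) hbr
  · exact absurd ((((ha.mono hsub).symm'.trans' h₁).trans' (hb.mono hsub)).symm') hbr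

lemma forest_disconnect {u v : V} :
    ∀ (n : ℕ) (D H : Finset E), D.card ≤ n →
    (∀ f ∈ H, ¬ ConnectedIn g₁ g₂ (H \ {f}) (g₁ f) (g₂ f)) →
    ConnectedIn g₁ g₂ H u v → ¬ ConnectedIn g₁ g₂ (H \ D) u v →
    ∃ f, f ∈ D ∧ f ∈ H ∧ ¬ ConnectedIn g₁ g₂ (H \ {f}) u v := by
  intro n
  induction n with
  | zero =>
      intro D H hcard hbr hconn hdis
      have : D = ∅ := Finset.card_eq_zero.1 (Nat.le_zero.1 hcard)
      subst this
      simp only [Finset.sdiff_empty] at hdis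
      exact absurd hconn hdis
  | succ n ihn =>
      intro D H hcard hbr hconn hdis
      have hne : (D ∩ H).Nonempty := by
        by_contra hemp
        have heq : H \ D = H := by
          rw [Finset.sdiff_eq_self_iff_disjoint, Finset.disjoint_left]
          intro a haH haD
          exact hemp ⟨a, Finset.mem_inter.2 ⟨haD, haH⟩⟩
        rw [heq] at hdis
        exact absurd hconn hdis
      obtain ⟨f₀, hf₀⟩ := hne
      rw [Finset.mem_inter] at hf₀
      by_cases h₀ : ConnectedIn g₁ g₂ (H \ {f₀}) u v
      · have hbr' : ∀ f ∈ H \ {f₀}, ¬ ConnectedIn g₁ g₂ ((H \ {f₀}) \ {f}) (g₁ f) (g₂ f) := by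
          intro f hf hc
          refine hbr f (Finset.mem_sdiff.1 hf).1 (hc.mono ?_)
          intro e he
          simp only [Finset.mem_sdiff] at he ⊢
          exact ⟨he.1.1, he.2⟩
        have heq : (H \ {f₀}) \ (D.erase f₀) = H \ D := by
          ext a
          simp only [Finset.mem_sdiff, Finset.mem_singleton, Finset.mem_erase]
          constructor
          · rintro ⟨⟨haH, hne0⟩, hnd⟩
            exact ⟨haH, fun had => hnd ⟨hne0, had⟩⟩
          · rintro ⟨haH, hnd⟩
            exact ⟨⟨haH, fun h => hnd (h ▸ hf₀.1)⟩, fun h => hnd h.2⟩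
        have hdis' : ¬ ConnectedIn g₁ g₂ ((H \ {f₀}) \ (D.erase f₀)) u v := by
          rw [heq]; exact hdis
        have hcard' : (D.erase f₀).card ≤ n := by
          have := Finset.card_erase_of_mem hf₀.1
          omega
        obtain ⟨f, hfD, hfH, hfnc⟩ := ihn (D.erase f₀) (H \ {f₀}) hcard' hbr' h₀ hdis'
        refine ⟨f, Finset.mem_of_mem_erase hfD, (Finset.mem_sdiff.1 hfH).1, ?_⟩
        intro h₁
        exact hfnc (helly (hbr f (Finset.mem_sdiff.1 hfH).1) h₀ h₁)
      · exact ⟨f₀, hf₀.1, hf₀.2, h₀⟩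

end Helpers

section CompHelpers

lemma mem_Qcomp {V E : Type*} [Fintype V] {g₁ g₂ : E → V} {H : Finset E} {u v : V} :
    u ∈ Qcomp g₁ g₂ H v ↔ ConnectedIn g₁ g₂ H u v := by
  simp [Qcomp]

lemma Qcomp_eq_of_mem {V E : Type*} [Fintype V] {g₁ g₂ : E → V} {H : Finset E} {u v : V}
    (h : u ∈ Qcomp g₁ g₂ H v) : Qcomp g₁ g₂ H u = Qcomp g₁ g₂ H v := by
  rw [mem_Qcomp] at h
  ext w
  simp only [mem_Qcomp]
  exact ⟨fun hw => hw.trans' h, fun hw => hw.trans' h.symm'⟩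

lemma self_mem_Qcomp {V E : Type*} [Fintype V] {g₁ g₂ : E → V} {H : Finset E} {v : V} :
    v ∈ Qcomp g₁ g₂ H v := mem_Qcomp.2 .refl

lemma exists_cut_edge {V E TV TE : Type*} [Fintype V] [Fintype E] [Fintype TE]
    {g₁ g₂ : E → V} {t₁ t₂ : TE → TV} (htree : IsTree' t₁ t₂)
    {M1 : TV → V} {L : Finset TV} (hM1 : Set.BijOn M1 (↑L) Set.univ)
    (M2 : TE → Finset E) (H F : Finset E)
    (v : V) (hsh : IsShattered t₁ t₂ M1 L M2 F (Qcomp g₁ g₂ (H \ F) v)) :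
    ∃ f ∈ Minv M2 F, ∃ e ∈ H,
      e ∈ cutEdges g₁ g₂ Finset.univ (compVerts t₁ t₂ M1 L f) ∧
      g₁ e ∈ Qcomp g₁ g₂ (H \ F) v := by
  obtain ⟨a, haL, b, hbL, haQ, hbQ, hnc⟩ := hsh
  obtain ⟨f, hfD, -, hfnc⟩ := forest_disconnect (Minv M2 F).card (Minv M2 F) Finset.univ
    le_rfl (fun f _ => htree.2 f) (htree.1 a b) hnc
  set cv := compVerts t₁ t₂ M1 L f with hcv
  have hmem : ∀ c ∈ L, ConnectedIn t₁ t₂ (Finset.univ \ {f}) c (t₁ f) → M1 c ∈ cv :=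
    fun c hc hcc => Finset.mem_image.2 ⟨c, Finset.mem_filter.2 ⟨hc, hcc⟩, rfl⟩
  have hnmem : ∀ c ∈ L, ¬ ConnectedIn t₁ t₂ (Finset.univ \ {f}) c (t₁ f) → M1 c ∉ cv := by
    intro c hc hcc hin
    obtain ⟨d, hd, hdc⟩ := Finset.mem_image.1 hin
    rw [Finset.mem_filter] at hd
    have hdceq : d = c := hM1.injOn (by exact_mod_cast hd.1) (by exact_mod_cast hc) hdc
    exact hcc (hdceq ▸ hd.2)
  have hxor : ¬ ((M1 a ∈ cv) ↔ (M1 b ∈ cv)) := by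
    rcases bridge_cases (f := f) (htree.1 a b) with h | ⟨ha, hb⟩ | ⟨ha, hb⟩
    · exact absurd h hfnc
    · have h1 := hmem a haL ha
      have h2 := hnmem b hbL (fun hb' => hfnc (ha.trans' hb'.symm'))
      exact fun hiff => h2 (hiff.1 h1)
    · have h1 := hmem b hbL hb
      have h2 := hnmem a haL (fun ha' => hfnc (ha'.trans' hb.symm'))
      exact fun hiff => h2 (hiff.2 h1)
  have hconn : ConnectedIn g₁ g₂ (H \ F) (M1 a) (M1 b) :=
    (mem_Qcomp.1 haQ).trans' (mem_Qcomp.1 hbQ).symm'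
  obtain ⟨e, heHF, hniff, hconn2⟩ := crossing_edge (fun w => w ∈ cv) hconn hxor
  refine ⟨f, hfD, e, (Finset.mem_sdiff.1 heHF).1, ?_, ?_⟩
  · exact Finset.mem_filter.2 ⟨Finset.mem_univ e, fun h => hniff (h ▸ Iff.rfl)⟩
  · exact mem_Qcomp.2 (hconn2.symm'.trans' (mem_Qcomp.1 haQ))

end CompHelpers

set_option maxHeartbeats 1000000 in
/-- If the tree is good for `F ⊆ H` (i.e. `Σ_{f ∈ M⁻¹(F)} y(f) ≤ 1/2`) and every edge of
`H` has capacity at least `α = 1/(4(p+q)β)`, then the number `ℓ` of shattered components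
satisfies `ℓ ≤ 2(p+q)β`, and `|Z_F| ≤ 2^{2(p+q)β} · k`. -/
theorem shatteredCount_and_ZF_bound {V E TV TE : Type*}
    [Fintype V] [Fintype E] [Fintype TE]
    (g₁ g₂ : E → V) (t₁ t₂ : TE → TV) (htree : IsTree' t₁ t₂)
    (M1 : TV → V) (L : Finset TV) (hM1 : Set.BijOn M1 (↑L) Set.univ)
    (M2 : TE → Finset E)
    (hM2 : ∀ f : TE, ConnectedIn g₁ g₂ (M2 f) (M1 (t₁ f)) (M1 (t₂ f)))
    (p q : ℕ) (hp : 1 ≤ p) (β : ℝ) (hβ : 0 < β)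
    (α : ℝ) (hα : α = 1 / (4 * ((p : ℝ) + q) * β))
    (k : ℕ) (st : Fin k → V × V) (H F : Finset E) (hFH : F ⊆ H)
    (x : E → NNReal) (hx : ∀ e ∈ H, α ≤ (x e : ℝ))
    (hgood : (∑ f ∈ Minv M2 F, (treeCap g₁ g₂ t₁ t₂ M1 L x f : ℝ)) ≤ 1 / 2) :
    (shatteredCount g₁ g₂ t₁ t₂ M1 L M2 H F : ℝ) ≤ 2 * ((p : ℝ) + q) * β ∧
      ((ZF g₁ g₂ t₁ t₂ M1 L M2 st H F).ncard : ℝ) ≤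
        (2 : ℝ) ^ (2 * ((p : ℝ) + q) * β) * k := by
  classical
  set S := (Finset.univ.image fun v => Qcomp g₁ g₂ (H \ F) v).filter
      (fun Q => IsShattered t₁ t₂ M1 L M2 F Q) with hSdef
  have hpq : (0:ℝ) < 4 * ((p:ℝ) + q) * β := by
    have h1 : (1:ℝ) ≤ (p:ℝ) := by exact_mod_cast hp
    have hq : (0:ℝ) ≤ (q:ℝ) := Nat.cast_nonneg q
    nlinarith
  have hα0 : 0 < α := by rw [hα]; exact one_div_pos.mpr hpq
  have hkey : ∀ Q ∈ S, ∃ fe : (_ : TE) × E, fe.1 ∈ Minv M2 F ∧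
      fe.2 ∈ cutEdges g₁ g₂ Finset.univ (compVerts t₁ t₂ M1 L fe.1) ∧
      fe.2 ∈ H ∧ g₁ fe.2 ∈ Q := by
    intro Q hQ
    rw [hSdef, Finset.mem_filter, Finset.mem_image] at hQ
    obtain ⟨⟨v, -, hv⟩, hsh⟩ := hQ
    subst hv
    obtain ⟨f, hf, e, heH, hecut, heQ⟩ := exists_cut_edge htree hM1 M2 H F v hsh
    exact ⟨⟨f, e⟩, hf, hecut, heH, heQ⟩
  choose φ hφ using hkey
  have hQcompS : ∀ Q ∈ S, ∀ w ∈ Q, Q = Qcomp g₁ g₂ (H \ F) w := by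
    intro Q hQ w hw
    rw [hSdef, Finset.mem_filter, Finset.mem_image] at hQ
    obtain ⟨⟨v, -, hv⟩, -⟩ := hQ
    subst hv
    exact (Qcomp_eq_of_mem hw).symm
  have hcard1 : (S.card : ℝ) * α ≤ 1 / 2 := by
    have e1 : (S.card : ℝ) * α = ∑ _Q ∈ S.attach, α := by
      rw [Finset.sum_const, Finset.card_attach, nsmul_eq_mul]
    have e2 : ∑ _Q ∈ S.attach, α ≤ ∑ Q ∈ S.attach, (x (φ Q.1 Q.2).2 : ℝ) :=
      Finset.sum_le_sum (fun Q _ => hx _ (hφ Q.1 Q.2).2.2.1)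
    have hinj2 : ∀ Q ∈ S.attach, ∀ Q' ∈ S.attach,
        φ Q.1 Q.2 = φ Q'.1 Q'.2 → Q = Q' := by
      intro Q _ Q' _ heq
      have h1 := (hφ Q.1 Q.2).2.2.2
      have h2 := (hφ Q'.1 Q'.2).2.2.2
      rw [heq] at h1
      exact Subtype.ext ((hQcompS Q.1 Q.2 _ h1).trans (hQcompS Q'.1 Q'.2 _ h2).symm)
    have e3 : ∑ Q ∈ S.attach, (x (φ Q.1 Q.2).2 : ℝ)
        = ∑ fe ∈ S.attach.image (fun Q => φ Q.1 Q.2), (x fe.2 : ℝ) := by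
      rw [Finset.sum_image hinj2]
    have hsub : S.attach.image (fun Q => φ Q.1 Q.2) ⊆
        (Minv M2 F).sigma
          (fun f => cutEdges g₁ g₂ Finset.univ (compVerts t₁ t₂ M1 L f)) := by
      intro fe hfe
      obtain ⟨Q, hQ, hfeQ⟩ := Finset.mem_image.1 hfe
      subst hfeQ
      exact Finset.mem_sigma.2 ⟨(hφ Q.1 Q.2).1, (hφ Q.1 Q.2).2.1⟩
    have e4 : ∑ fe ∈ S.attach.image (fun Q => φ Q.1 Q.2), (x fe.2 : ℝ)
        ≤ ∑ fe ∈ (Minv M2 F).sigma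
            (fun f => cutEdges g₁ g₂ Finset.univ (compVerts t₁ t₂ M1 L f)),
            (x fe.2 : ℝ) :=
      Finset.sum_le_sum_of_subset_of_nonneg hsub (fun fe _ _ => (x fe.2).coe_nonneg)
    have e5 : ∑ fe ∈ (Minv M2 F).sigma
          (fun f => cutEdges g₁ g₂ Finset.univ (compVerts t₁ t₂ M1 L f)),
          (x fe.2 : ℝ)
        = ∑ f ∈ Minv M2 F, (treeCap g₁ g₂ t₁ t₂ M1 L x f : ℝ) := by
      rw [Finset.sum_sigma]
      refine Finset.sum_congr rfl fun f _ => ?_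
      rw [treeCap, NNReal.coe_sum]
    calc (S.card : ℝ) * α = ∑ _Q ∈ S.attach, α := e1
      _ ≤ ∑ Q ∈ S.attach, (x (φ Q.1 Q.2).2 : ℝ) := e2
      _ = ∑ fe ∈ S.attach.image (fun Q => φ Q.1 Q.2), (x fe.2 : ℝ) := e3
      _ ≤ _ := e4
      _ = ∑ f ∈ Minv M2 F, (treeCap g₁ g₂ t₁ t₂ M1 L x f : ℝ) := e5
      _ ≤ 1 / 2 := hgood
  have hl : (S.card : ℝ) ≤ 2 * ((p:ℝ) + q) * β := by
    have h2 : (S.card : ℝ) ≤ (1/2) / α := (le_div_iff₀ hα0).2 hcard1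
    rw [hα] at h2
    calc (S.card : ℝ) ≤ (1/2) / (1 / (4 * ((p:ℝ)+q) * β)) := h2
      _ = 2 * ((p:ℝ)+q) * β := by rw [one_div (4 * ((p:ℝ)+q) * β), div_eq_mul_inv, inv_inv]; ring
  have hsc : shatteredCount g₁ g₂ t₁ t₂ M1 L M2 H F = S.card := rfl
  refine ⟨by rw [hsc]; exact hl, ?_⟩
  set ψ2 : Fin k × Finset (Finset V) → Finset V × Finset V := fun z =>
    (z.2.biUnion id ∪ Qcomp g₁ g₂ (H \ F) (st z.1).1,
     (S \ z.2).biUnion id ∪ Qcomp g₁ g₂ (H \ F) (st z.1).2) with hψ2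
  set Dom := (Finset.univ : Finset (Fin k)) ×ˢ S.powerset with hDom
  have hsub : ZF g₁ g₂ t₁ t₂ M1 L M2 st H F ⊆ ↑(Dom.image ψ2) := by
    rintro P ⟨i, A, B, hdisj, hunion, hcomp, hP1, hP2, -⟩
    have hT : ∀ Q : Finset V, Q ∈ S.filter (fun Q' => Q' ⊆ A) ↔ Q ∈ S ∧ Q ⊆ A := by
      intro Q; exact Finset.mem_filter
    have hmemD : (i, S.filter (fun Q' => Q' ⊆ A)) ∈ Dom :=
      Finset.mem_product.2 ⟨Finset.mem_univ i,
        Finset.mem_powerset.2 (Finset.filter_subset _ _)⟩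
    have hshat : ∀ w, w ∈ A ∪ B →
        IsShattered t₁ t₂ M1 L M2 F (Qcomp g₁ g₂ (H \ F) w) := by
      intro w hw
      rw [hunion, Finset.mem_filter] at hw
      exact hw.2
    have hQS : ∀ w, IsShattered t₁ t₂ M1 L M2 F (Qcomp g₁ g₂ (H \ F) w) →
        Qcomp g₁ g₂ (H \ F) w ∈ S := by
      intro w hw
      rw [hSdef, Finset.mem_filter]
      exact ⟨Finset.mem_image.2 ⟨w, Finset.mem_univ w, rfl⟩, hw⟩
    have hAeq : (S.filter (fun Q' => Q' ⊆ A)).biUnion id = A := by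
      ext w
      simp only [Finset.mem_biUnion, id_eq]
      constructor
      · rintro ⟨Q, hQT, hwQ⟩
        exact ((hT Q).1 hQT).2 hwQ
      · intro hwA
        have hsh := hshat w (Finset.mem_union_left _ hwA)
        have hQA : Qcomp g₁ g₂ (H \ F) w ⊆ A := by
          rcases hcomp w hsh with h | h
          · exact h
          · exact absurd (h self_mem_Qcomp) (Finset.disjoint_left.1 hdisj hwA)
        exact ⟨_, (hT _).2 ⟨hQS w hsh, hQA⟩, self_mem_Qcomp⟩
    have hBeq : (S \ S.filter (fun Q' => Q' ⊆ A)).biUnion id = B := by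
      ext w
      simp only [Finset.mem_biUnion, id_eq]
      constructor
      · rintro ⟨Q, hQST, hwQ⟩
        obtain ⟨hQS', hQnT⟩ := Finset.mem_sdiff.1 hQST
        have hQSc := hQS'
        rw [hSdef, Finset.mem_filter, Finset.mem_image] at hQSc
        obtain ⟨⟨v, -, hv⟩, hshQ⟩ := hQSc
        have hshv : IsShattered t₁ t₂ M1 L M2 F (Qcomp g₁ g₂ (H \ F) v) := by
          rw [hv]; exact hshQ
        rcases hcomp v hshv with h | h
        · rw [hv] at h
          exact absurd ((hT Q).2 ⟨hQS', h⟩) hQnT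
        · rw [hv] at h
          exact h hwQ
      · intro hwB
        have hsh := hshat w (Finset.mem_union_right _ hwB)
        have hQB : Qcomp g₁ g₂ (H \ F) w ⊆ B := by
          rcases hcomp w hsh with h | h
          · exact absurd hwB (Finset.disjoint_left.1 hdisj (h self_mem_Qcomp))
          · exact h
        refine ⟨_, Finset.mem_sdiff.2 ⟨hQS w hsh, ?_⟩, self_mem_Qcomp⟩
        intro hT'
        have hwA : w ∈ A := ((hT _).1 hT').2 self_mem_Qcomp
        exact (Finset.disjoint_left.1 hdisj hwA) hwB
    refine Finset.mem_coe.2 (Finset.mem_image.2 ⟨(i, S.filter (fun Q' => Q' ⊆ A)), hmemD, ?_⟩)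
    have hc1 : (ψ2 (i, S.filter (fun Q' => Q' ⊆ A))).1 = P.1 := by
      rw [hψ2]
      dsimp only
      rw [hAeq, hP1]
    have hc2 : (ψ2 (i, S.filter (fun Q' => Q' ⊆ A))).2 = P.2 := by
      rw [hψ2]
      dsimp only
      rw [hBeq, hP2]
    exact Prod.ext_iff.2 ⟨hc1, hc2⟩
  have hfin : (Dom.image ψ2).card ≤ k * 2 ^ S.card := by
    calc (Dom.image ψ2).card ≤ Dom.card := Finset.card_image_le
      _ = k * 2 ^ S.card := by
          rw [hDom, Finset.card_product, Finset.card_univ, Fintype.card_fin,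
            Finset.card_powerset]
  have hncard : ((ZF g₁ g₂ t₁ t₂ M1 L M2 st H F).ncard : ℝ)
      ≤ (k : ℝ) * 2 ^ S.card := by
    have h1 : (ZF g₁ g₂ t₁ t₂ M1 L M2 st H F).ncard ≤ (Dom.image ψ2).card := by
      have h := Set.ncard_le_ncard hsub (Finset.finite_toSet _)
      rwa [Set.ncard_coe_finset] at h
    exact_mod_cast le_trans h1 hfin
  have hpow : ((2:ℝ) ^ S.card : ℝ) ≤ (2:ℝ) ^ (2 * ((p:ℝ)+q) * β) := by
    rw [← Real.rpow_natCast 2 S.card]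
    exact Real.rpow_le_rpow_of_exponent_le one_le_two hl
  calc ((ZF g₁ g₂ t₁ t₂ M1 L M2 st H F).ncard : ℝ)
      ≤ (k : ℝ) * 2 ^ S.card := hncard
    _ ≤ (k : ℝ) * 2 ^ (2 * ((p:ℝ)+q) * β) :=
        mul_le_mul_of_nonneg_left hpow (Nat.cast_nonneg k)
    _ = 2 ^ (2 * ((p:ℝ)+q) * β) * k := mul_comm _ _
end
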